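/- arXiv:2401.17850 — 5 statements merged into one kernel-verified Lean document; each statement's English description precedes it below -/
import Mathlib

section
/- Let n ≥ 1, m ≥ 1 be integers and c ∈ ℂ with c ≠ 0. For g := X₂² + X₃^{n+1} + c·X₁^m ∈ MvPolynomial (Fin 3) ℂ (the blow-A_n model of blow-order m), the Milnor algebra MvPolynomial (Fin 3) ℂ / J(g) is a ℂ-vector space of dimension n·(m−1). -/
open MvPolynomial


lemma jac_span_eq (n m : ℕ) (hn : 1 ≤ n) (hm : 1 ≤ m) (c : ℂ) (hc : c ≠ 0) :
    Ideal.span (Set.range fun i : Fin 3 =>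
        pderiv i (X 1 ^ 2 + X 2 ^ (n + 1) + C c * X 0 ^ m : MvPolynomial (Fin 3) ℂ)) =
    Ideal.span {X 0 ^ (m - 1), X 1, X 2 ^ n} := by
  have h0 : pderiv (0:Fin 3) (X 1 ^ 2 + X 2 ^ (n + 1) + C c * X 0 ^ m : MvPolynomial (Fin 3) ℂ)
      = C (c * m) * X 0 ^ (m-1) := by simp [C_mul, mul_assoc]
  have h1 : pderiv (1:Fin 3) (X 1 ^ 2 + X 2 ^ (n + 1) + C c * X 0 ^ m : MvPolynomial (Fin 3) ℂ)
      = C 2 * X 1 := by simp [map_ofNat]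
  have h2 : pderiv (2:Fin 3) (X 1 ^ 2 + X 2 ^ (n + 1) + C c * X 0 ^ m : MvPolynomial (Fin 3) ℂ)
      = C ((n:ℂ)+1) * X 2 ^ n := by simp
  have hcm : (c * m) ≠ 0 :=
    mul_ne_zero hc (Nat.cast_ne_zero.mpr (by omega))
  have hn1 : ((n:ℂ)+1) ≠ 0 := by
    have : ((n:ℂ)+1) = ((n+1 : ℕ):ℂ) := by push_cast; ring
    rw [this]; exact Nat.cast_ne_zero.mpr n.succ_ne_zero
  apply le_antisymm
  · rw [Ideal.span_le]
    rintro _ ⟨i, rfl⟩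
    beta_reduce
    fin_cases i
    · show pderiv (0:Fin 3) _ ∈ _
      rw [h0]; exact Ideal.mul_mem_left _ _ (Ideal.subset_span (by simp))
    · show pderiv (1:Fin 3) _ ∈ _
      rw [h1]; exact Ideal.mul_mem_left _ _ (Ideal.subset_span (by simp))
    · show pderiv (2:Fin 3) _ ∈ _
      rw [h2]; exact Ideal.mul_mem_left _ _ (Ideal.subset_span (by simp))
  · rw [Ideal.span_le]
    rintro x hx
    simp only [Set.mem_insert_iff, Set.mem_singleton_iff] at hx
    rcases hx with rfl | rfl | rfl
    · have mem : C (c*(m:ℂ)) * X 0 ^ (m-1) ∈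
          Ideal.span (Set.range fun i : Fin 3 =>
            pderiv i (X 1 ^ 2 + X 2 ^ (n + 1) + C c * X 0 ^ m : MvPolynomial (Fin 3) ℂ)) :=
        Ideal.subset_span ⟨0, h0⟩
      have h := Ideal.mul_mem_left _ (C (c*(m:ℂ))⁻¹) mem
      rwa [← mul_assoc, ← C_mul, inv_mul_cancel₀ hcm, C_1, one_mul] at h
    · have mem : C (2:ℂ) * X 1 ∈
          Ideal.span (Set.range fun i : Fin 3 =>
            pderiv i (X 1 ^ 2 + X 2 ^ (n + 1) + C c * X 0 ^ m : MvPolynomial (Fin 3) ℂ)) :=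
        Ideal.subset_span ⟨1, h1⟩
      have h := Ideal.mul_mem_left _ (C (2:ℂ)⁻¹) mem
      rwa [← mul_assoc, ← C_mul, inv_mul_cancel₀ two_ne_zero, C_1, one_mul] at h
    · have mem : C ((n:ℂ)+1) * X 2 ^ n ∈
          Ideal.span (Set.range fun i : Fin 3 =>
            pderiv i (X 1 ^ 2 + X 2 ^ (n + 1) + C c * X 0 ^ m : MvPolynomial (Fin 3) ℂ)) :=
        Ideal.subset_span ⟨2, h2⟩
      have h := Ideal.mul_mem_left _ (C ((n:ℂ)+1)⁻¹) mem
      rwa [← mul_assoc, ← C_mul, inv_mul_cancel₀ hn1, C_1, one_mul] at h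



theorem quot_finrank (k n : ℕ) (hk : 1 ≤ k) (hn : 1 ≤ n) :
    FiniteDimensional ℂ
      (MvPolynomial (Fin 3) ℂ ⧸ Ideal.span {(X 0 ^ k : MvPolynomial (Fin 3) ℂ), X 1, X 2 ^ n}) ∧
    Module.finrank ℂ
      (MvPolynomial (Fin 3) ℂ ⧸ Ideal.span {(X 0 ^ k : MvPolynomial (Fin 3) ℂ), X 1, X 2 ^ n})
      = n * k := by
  set I : Ideal (MvPolynomial (Fin 3) ℂ) := Ideal.span {X 0 ^ k, X 1, X 2 ^ n} with hI
  set Q := MvPolynomial (Fin 3) ℂ ⧸ I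
  set f₁ : Polynomial ℂ := Polynomial.X ^ k with hf₁
  set A := AdjoinRoot f₁
  set f₂ : Polynomial A := Polynomial.X ^ n with hf₂
  set B := AdjoinRoot f₂
  -- roots are nilpotent
  have hr₁ : (AdjoinRoot.root f₁) ^ k = 0 := by
    rw [AdjoinRoot.root, ← map_pow, ← hf₁, AdjoinRoot.mk_self]
  have hr₂ : (AdjoinRoot.root f₂) ^ n = 0 := by
    rw [AdjoinRoot.root, ← map_pow, ← hf₂, AdjoinRoot.mk_self]
  -- forward map
  set v : Fin 3 → B := ![algebraMap A B (AdjoinRoot.root f₁), 0, AdjoinRoot.root f₂] with hv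
  set φ₀ : MvPolynomial (Fin 3) ℂ →ₐ[ℂ] B := aeval v with hφ₀
  have hker : ∀ p ∈ I, φ₀ p = 0 := by
    intro p hp
    refine Submodule.span_induction ?_ ?_ ?_ ?_ hp
    · rintro x hx
      simp only [Set.mem_insert_iff, Set.mem_singleton_iff] at hx
      rcases hx with rfl | rfl | rfl
      · show aeval v (X 0 ^ k) = 0
        rw [map_pow, aeval_X]
        show ((algebraMap A B) (AdjoinRoot.root f₁)) ^ k = 0
        rw [← map_pow, hr₁, map_zero]
      · simp [hφ₀, hv]
      · simp [hφ₀, hv, hr₂]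
    · simp
    · intro x y _ _ hx hy; simp [hx, hy]
    · intro a x _ hx; simp [hx]
  set φ : Q →ₐ[ℂ] B := Ideal.Quotient.liftₐ I φ₀ hker with hφ
  -- inverse maps
  have hq0 : (Ideal.Quotient.mk I (X 0)) ^ k = 0 := by
    rw [← map_pow, Ideal.Quotient.eq_zero_iff_mem]
    exact Ideal.subset_span (by simp)
  have hq1 : (Ideal.Quotient.mk I (X 1)) = 0 := by
    rw [Ideal.Quotient.eq_zero_iff_mem]
    exact Ideal.subset_span (by simp)
  have hq2 : (Ideal.Quotient.mk I (X 2)) ^ n = 0 := by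
    rw [← map_pow, Ideal.Quotient.eq_zero_iff_mem]
    exact Ideal.subset_span (by simp)
  have he₁ : Polynomial.eval₂ (algebraMap ℂ Q) (Ideal.Quotient.mk I (X 0)) f₁ = 0 := by
    rw [hf₁, Polynomial.eval₂_X_pow, hq0]
  set ψ₁ : A →+* Q := AdjoinRoot.lift (algebraMap ℂ Q) (Ideal.Quotient.mk I (X 0)) he₁ with hψ₁
  have he₂ : Polynomial.eval₂ ψ₁ (Ideal.Quotient.mk I (X 2)) f₂ = 0 := by
    rw [hf₂, Polynomial.eval₂_X_pow, hq2]
  set ψ₂ : B →+* Q := AdjoinRoot.lift ψ₁ (Ideal.Quotient.mk I (X 2)) he₂ with hψ₂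
  -- φ ∘ ψ₁ = algebraMap A B
  have key₁ : ∀ a : A, φ (ψ₁ a) = algebraMap A B a := by
    have : (φ.toRingHom.comp ψ₁).comp (AdjoinRoot.mk f₁)
        = (algebraMap A B).comp (AdjoinRoot.mk f₁) := by
      apply Polynomial.ringHom_ext
      · intro z
        show φ (ψ₁ (AdjoinRoot.of f₁ z)) = algebraMap A B (AdjoinRoot.of f₁ z)
        rw [hψ₁, AdjoinRoot.lift_of]
        rw [← AdjoinRoot.algebraMap_eq, ← IsScalarTower.algebraMap_apply ℂ A B]
        exact φ.commutes z
      · show φ (ψ₁ (AdjoinRoot.root f₁)) = algebraMap A B (AdjoinRoot.root f₁)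
        rw [hψ₁, AdjoinRoot.lift_root]
        show φ₀ (X 0) = _
        rw [hφ₀, aeval_X]
        rfl
    intro a
    obtain ⟨p, rfl⟩ := AdjoinRoot.mk_surjective (g := f₁) a
    exact congrArg (fun F => F p) this
  -- φ ∘ ψ₂ = id
  have comp₂ : ∀ b : B, φ (ψ₂ b) = b := by
    have : (φ.toRingHom.comp ψ₂).comp (AdjoinRoot.mk f₂)
        = (RingHom.id B).comp (AdjoinRoot.mk f₂) := by
      apply Polynomial.ringHom_ext
      · intro a
        show φ (ψ₂ (AdjoinRoot.of f₂ a)) = AdjoinRoot.of f₂ a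
        rw [hψ₂, AdjoinRoot.lift_of, ← AdjoinRoot.algebraMap_eq]
        exact key₁ a
      · show φ (ψ₂ (AdjoinRoot.root f₂)) = AdjoinRoot.root f₂
        rw [hψ₂, AdjoinRoot.lift_root]
        show φ₀ (X 2) = _
        rw [hφ₀, aeval_X]
        rfl
    intro b
    obtain ⟨p, rfl⟩ := AdjoinRoot.mk_surjective (g := f₂) b
    exact congrArg (fun F => F p) this
  -- ψ₂ ∘ φ = id
  have comp₁ : ∀ q : Q, ψ₂ (φ q) = q := by
    have : (ψ₂.comp φ.toRingHom).comp (Ideal.Quotient.mk I)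
        = (RingHom.id Q).comp (Ideal.Quotient.mk I) := by
      apply MvPolynomial.ringHom_ext
      · intro z
        show ψ₂ (φ (Ideal.Quotient.mk I (MvPolynomial.C z))) = Ideal.Quotient.mk I (MvPolynomial.C z)
        have h1 : φ (Ideal.Quotient.mk I (MvPolynomial.C z)) = algebraMap ℂ B z := by
          show φ₀ (MvPolynomial.C z) = _
          rw [hφ₀, aeval_C]
        rw [h1, IsScalarTower.algebraMap_apply ℂ A B, AdjoinRoot.algebraMap_eq,
          hψ₂, AdjoinRoot.lift_of, hψ₁]
        rw [AdjoinRoot.algebraMap_eq, AdjoinRoot.lift_of]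
        rfl
      · intro i
        show ψ₂ (φ (Ideal.Quotient.mk I (X i))) = Ideal.Quotient.mk I (X i)
        have hφX : ∀ j : Fin 3, φ (Ideal.Quotient.mk I (X j)) = v j := by
          intro j
          show φ₀ (X j) = v j
          rw [hφ₀, aeval_X]
        fin_cases i
        · show ψ₂ (φ (Ideal.Quotient.mk I (X 0))) = Ideal.Quotient.mk I (X 0)
          rw [hφX 0]
          show ψ₂ (algebraMap A B (AdjoinRoot.root f₁)) = _
          rw [AdjoinRoot.algebraMap_eq, hψ₂, AdjoinRoot.lift_of, hψ₁, AdjoinRoot.lift_root]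
        · show ψ₂ (φ (Ideal.Quotient.mk I (X 1))) = Ideal.Quotient.mk I (X 1)
          rw [hφX 1]
          show ψ₂ 0 = _
          rw [map_zero, hq1]
        · show ψ₂ (φ (Ideal.Quotient.mk I (X 2))) = Ideal.Quotient.mk I (X 2)
          rw [hφX 2]
          show ψ₂ (AdjoinRoot.root f₂) = _
          rw [hψ₂, AdjoinRoot.lift_root]
    intro q
    obtain ⟨p, rfl⟩ := Ideal.Quotient.mk_surjective q
    exact congrArg (fun F => F p) this
  -- the algebra equivalence
  have hbij : Function.Bijective φ :=
    ⟨Function.LeftInverse.injective comp₁, Function.RightInverse.surjective comp₂⟩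
  let e : Q ≃ₐ[ℂ] B := AlgEquiv.ofBijective φ hbij
  -- finite dimensionality of B
  have hmon₁ : f₁.Monic := Polynomial.monic_X_pow k
  have hmon₂ : f₂.Monic := Polynomial.monic_X_pow n
  let pb₁ := AdjoinRoot.powerBasis' hmon₁
  let pb₂ := AdjoinRoot.powerBasis' hmon₂
  haveI : Nontrivial A := AdjoinRoot.nontrivial f₁
    (by rw [hf₁, Polynomial.degree_X_pow]; exact_mod_cast Nat.one_le_iff_ne_zero.mp hk)
  haveI : Module.Finite ℂ A := Module.Finite.of_basis pb₁.basis
  haveI : Module.Finite A B := Module.Finite.of_basis pb₂.basis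
  haveI : Module.Free ℂ A := Module.Free.of_basis pb₁.basis
  haveI : Module.Free A B := Module.Free.of_basis pb₂.basis
  haveI hfdB : Module.Finite ℂ B := Module.Finite.trans A B
  have hrkA : Module.finrank ℂ A = k := by
    rw [pb₁.finrank]
    show f₁.natDegree = k
    rw [hf₁, Polynomial.natDegree_X_pow]
  have hrkB : Module.finrank A B = n := by
    rw [pb₂.finrank]
    show f₂.natDegree = n
    rw [hf₂, Polynomial.natDegree_X_pow]
  have hrk : Module.finrank ℂ B = n * k := by
    rw [← Module.finrank_mul_finrank ℂ A B, hrkA, hrkB, Nat.mul_comm]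
  constructor
  · exact Module.Finite.equiv e.toLinearEquiv.symm
  · rw [e.toLinearEquiv.finrank_eq, hrk]


/-- The Jacobian ideal of `g`, generated by its partial derivatives. -/
noncomputable def jacobianIdeal (g : MvPolynomial (Fin 3) ℂ) :
    Ideal (MvPolynomial (Fin 3) ℂ) :=
  Ideal.span (Set.range fun i : Fin 3 => pderiv i g)

/-- The blow-`Aₙ` model `x₂² + x₃^{n+1} + c·x₁^m` of blow-order `m` has Milnor
number `n·(m-1)`. -/
theorem milnor_number_blow_An (n m : ℕ) (hn : 1 ≤ n) (hm : 1 ≤ m)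
    (c : ℂ) (hc : c ≠ 0) :
    FiniteDimensional ℂ
      (MvPolynomial (Fin 3) ℂ ⧸ jacobianIdeal (X 1 ^ 2 + X 2 ^ (n + 1) + C c * X 0 ^ m)) ∧
    Module.finrank ℂ
      (MvPolynomial (Fin 3) ℂ ⧸ jacobianIdeal (X 1 ^ 2 + X 2 ^ (n + 1) + C c * X 0 ^ m)) =
      n * (m - 1) := by
  have hspan : jacobianIdeal (X 1 ^ 2 + X 2 ^ (n + 1) + C c * X 0 ^ m)
      = Ideal.span {X 0 ^ (m - 1), X 1, X 2 ^ n} := jac_span_eq n m hn hm c hc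
  rw [hspan]
  rcases Nat.lt_or_ge m 2 with hm2 | hm2
  · -- m = 1 : the ideal is the whole ring
    have hm1 : m = 1 := by omega
    subst hm1
    have htop : Ideal.span ({X 0 ^ (1 - 1), X 1, X 2 ^ n} :
        Set (MvPolynomial (Fin 3) ℂ)) = ⊤ := by
      rw [Ideal.eq_top_iff_one]
      have : (X 0 ^ (1-1) : MvPolynomial (Fin 3) ℂ) = 1 := by norm_num
      exact this ▸ Ideal.subset_span (by simp)
    rw [htop]
    haveI : Subsingleton (MvPolynomial (Fin 3) ℂ ⧸ (⊤ : Ideal (MvPolynomial (Fin 3) ℂ))) :=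
      Ideal.Quotient.subsingleton_iff.mpr rfl
    refine ⟨Module.Finite.of_finite, ?_⟩
    simp [Module.finrank_zero_of_subsingleton]
  · have := quot_finrank (m - 1) n (by omega) hn
    exact this
end

section
/- Let n ≥ 4, m ≥ 1 be integers and c ∈ ℂ with c ≠ 0. For g := X₂²X₃ + X₃^{n−1} + c·X₁^m ∈ MvPolynomial (Fin 3) ℂ (the blow-D_n model of blow-order m), the Milnor algebra MvPolynomial (Fin 3) ℂ / J(g) is a ℂ-vector space of dimension n·(m−1). -/
open MvPolynomial

namespace MilnorBlowDn

noncomputable section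

abbrev P := MvPolynomial (Fin 3) ℂ

variable (a e : ℕ) (u : ℂ)

/-- The model ideal. -/
def Iid : Ideal P :=
  Ideal.span {X 0 ^ a, X 1 * X 2, X 1 ^ 2 + C u * X 2 ^ e}

/-- normal form of a monomial -/
def nfMon (d : Fin 3 →₀ ℕ) : P :=
  if a ≤ d 0 then 0
  else if d 1 = 0 then (if d 2 ≤ e then monomial d 1 else 0)
  else if d 1 = 1 then (if d 2 = 0 then monomial d 1 else 0)
  else if d 1 = 2 ∧ d 2 = 0 then
    monomial (Finsupp.single 0 (d 0) + Finsupp.single 2 e) (-u)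
  else 0

/-- normal form as a linear map -/
def NF : P →ₗ[ℂ] P :=
  (basisMonomials (Fin 3) ℂ).constr ℂ (nfMon a e u)

lemma NF_monomial (d : Fin 3 →₀ ℕ) (r : ℂ) :
    NF a e u (monomial d r) = r • nfMon a e u d := by
  have h : (monomial d r : P) = r • monomial d 1 := by
    rw [smul_monomial, smul_eq_mul, mul_one]
  rw [h, map_smul]
  congr 1
  have : (monomial d 1 : P) = basisMonomials (Fin 3) ℂ d := by
    rw [coe_basisMonomials]
  rw [this, NF, Module.Basis.constr_basis]

lemma mem_of_le {d₀ d : Fin 3 →₀ ℕ} (h : (monomial d₀ 1 : P) ∈ Iid a e u)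
    (hle : d₀ ≤ d) (r : ℂ) : (monomial d r : P) ∈ Iid a e u := by
  have : (monomial d r : P) = monomial (d - d₀) r * monomial d₀ 1 := by
    rw [monomial_mul, mul_one, tsub_add_cancel_of_le hle]
  rw [this]
  exact Ideal.mul_mem_left _ _ h

lemma gen1_mem : (monomial (Finsupp.single 0 a) 1 : P) ∈ Iid a e u := by
  rw [← X_pow_eq_monomial]
  exact Ideal.subset_span (by simp)

lemma gen2_mem :
    (monomial (Finsupp.single 1 1 + Finsupp.single 2 1) 1 : P) ∈ Iid a e u := by
  have : (monomial (Finsupp.single 1 1 + Finsupp.single 2 1) 1 : P) = X 1 * X 2 := by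
    rw [X, X, monomial_mul, mul_one]
  rw [this]
  exact Ideal.subset_span (by simp)

lemma gen3_mem : (X 1 ^ 2 + C u * X 2 ^ e : P) ∈ Iid a e u :=
  Ideal.subset_span (by simp)

lemma X2_pow_mem (hu : u ≠ 0) :
    (monomial (Finsupp.single 2 (e + 1)) 1 : P) ∈ Iid a e u := by
  rw [← X_pow_eq_monomial]
  have key : (X 2 : P) ^ (e + 1) =
      C u⁻¹ * (X 2 * (X 1 ^ 2 + C u * X 2 ^ e)) - C u⁻¹ * (X 1 * (X 1 * X 2)) := by
    have h1 : (C u⁻¹ * C u : P) = 1 := by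
      rw [← C_mul, inv_mul_cancel₀ hu, C_1]
    calc (X 2 : P) ^ (e + 1) = (C u⁻¹ * C u) * X 2 ^ (e + 1) := by rw [h1, one_mul]
      _ = C u⁻¹ * (X 2 * (X 1 ^ 2 + C u * X 2 ^ e)) - C u⁻¹ * (X 1 * (X 1 * X 2)) := by
        ring
  rw [key]
  exact Ideal.sub_mem _ (Ideal.mul_mem_left _ _ (Ideal.mul_mem_left _ _ (gen3_mem a e u)))
    (Ideal.mul_mem_left _ _ (Ideal.mul_mem_left _ _ (Ideal.subset_span (by simp))))

lemma X1_cube_mem (he : 1 ≤ e) :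
    (monomial (Finsupp.single 1 3) 1 : P) ∈ Iid a e u := by
  rw [← X_pow_eq_monomial]
  have hsplit : (X 2 : P) ^ e = X 2 ^ (e - 1) * X 2 := by
    rw [← pow_succ]
    congr 1
    omega
  have key : (X 1 : P) ^ 3 =
      X 1 * (X 1 ^ 2 + C u * X 2 ^ e) - C u * X 2 ^ (e - 1) * (X 1 * X 2) := by
    rw [hsplit]; ring
  rw [key]
  exact Ideal.sub_mem _ (Ideal.mul_mem_left _ _ (gen3_mem a e u))
    (Ideal.mul_mem_left _ _ (Ideal.subset_span (by simp)))

lemma mem1 {d : Fin 3 →₀ ℕ} (h : a ≤ d 0) (r : ℂ) :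
    (monomial d r : P) ∈ Iid a e u :=
  mem_of_le a e u (gen1_mem a e u) (Finsupp.single_le_iff.2 h) r

lemma mem2 {d : Fin 3 →₀ ℕ} (h1 : 1 ≤ d 1) (h2 : 1 ≤ d 2) (r : ℂ) :
    (monomial d r : P) ∈ Iid a e u := by
  refine mem_of_le a e u (gen2_mem a e u) ?_ r
  rw [Finsupp.le_def]
  intro i
  fin_cases i <;> simp [Finsupp.single_apply] <;> omega

lemma mem3 (hu : u ≠ 0) {d : Fin 3 →₀ ℕ} (h : e + 1 ≤ d 2) (r : ℂ) :
    (monomial d r : P) ∈ Iid a e u :=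
  mem_of_le a e u (X2_pow_mem a e u hu) (Finsupp.single_le_iff.2 h) r

lemma mem4 (he : 1 ≤ e) {d : Fin 3 →₀ ℕ} (h : 3 ≤ d 1) (r : ℂ) :
    (monomial d r : P) ∈ Iid a e u :=
  mem_of_le a e u (X1_cube_mem a e u he) (Finsupp.single_le_iff.2 h) r

lemma sub_nf_mem (he : 1 ≤ e) (hu : u ≠ 0) (d : Fin 3 →₀ ℕ) :
    (monomial d 1 - nfMon a e u d : P) ∈ Iid a e u := by
  rw [nfMon]
  split_ifs with h1 h2 h3 h4 h5 h6
  · rw [sub_zero]; exact mem1 a e u h1 1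
  · rw [sub_self]; exact Ideal.zero_mem _
  · rw [sub_zero]; exact mem3 a e u hu (by omega) 1
  · rw [sub_self]; exact Ideal.zero_mem _
  · rw [sub_zero]; exact mem2 a e u (by omega) (by omega) 1
  · -- d 1 = 2, d 2 = 0 case
    obtain ⟨hd1, hd2⟩ := h6
    set t := d 0 with ht
    have hd : d = Finsupp.single 1 2 + Finsupp.single 0 t := by
      ext i
      fin_cases i <;> simp [Finsupp.single_apply] <;> omega
    have key : (monomial d 1 : P)
        - monomial (Finsupp.single 0 t + Finsupp.single 2 e) (-u)
        = (X 1 ^ 2 + C u * X 2 ^ e) * monomial (Finsupp.single 0 t) 1 := by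
      rw [add_mul, X_pow_eq_monomial, C_mul_X_pow_eq_monomial, monomial_mul, monomial_mul,
        mul_one, mul_one, hd, map_neg, sub_neg_eq_add,
        add_comm (Finsupp.single (0 : Fin 3) t) (Finsupp.single 2 e)]
    rw [key]
    exact Ideal.mul_mem_right _ _ (gen3_mem a e u)
  · -- remaining: d 1 ≥ 2 but not (d 1 = 2 ∧ d 2 = 0)
    rw [sub_zero]
    by_cases h7 : 3 ≤ d 1
    · exact mem4 a e u he h7 1
    · exact mem2 a e u (by omega) (by omega) 1

lemma nfMon_zero_of_ge {d : Fin 3 →₀ ℕ} (h : a ≤ d 0) : nfMon a e u d = 0 := by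
  rw [nfMon, if_pos h]

lemma nfMon_zero_of_both {d : Fin 3 →₀ ℕ} (h1 : 1 ≤ d 1) (h2 : 1 ≤ d 2) :
    nfMon a e u d = 0 := by
  rw [nfMon]
  split_ifs <;> first | rfl | (exfalso; omega)

lemma nfMon_zero_of_hi2 {d : Fin 3 →₀ ℕ} (h : e + 1 ≤ d 2) : nfMon a e u d = 0 := by
  rw [nfMon]
  split_ifs <;> first | rfl | (exfalso; omega)

lemma nfMon_zero_of_hi1 {d : Fin 3 →₀ ℕ} (h : 3 ≤ d 1) : nfMon a e u d = 0 := by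
  rw [nfMon]
  split_ifs <;> first | rfl | (exfalso; omega)

lemma NF_kill_gen1 (d : Fin 3 →₀ ℕ) :
    NF a e u (monomial d 1 * X 0 ^ a) = 0 := by
  rw [X_pow_eq_monomial, monomial_mul, mul_one, NF_monomial, nfMon_zero_of_ge, smul_zero]
  simp [Finsupp.single_apply]

lemma NF_kill_gen2 (d : Fin 3 →₀ ℕ) :
    NF a e u (monomial d 1 * (X 1 * X 2)) = 0 := by
  have : (X 1 * X 2 : P) = monomial (Finsupp.single 1 1 + Finsupp.single 2 1) 1 := by
    rw [X, X, monomial_mul, mul_one]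
  rw [this, monomial_mul, mul_one, NF_monomial, nfMon_zero_of_both, smul_zero]
  · simp [Finsupp.single_apply]
  · simp [Finsupp.single_apply]

lemma NF_kill_gen3 (he : 1 ≤ e) (d : Fin 3 →₀ ℕ) :
    NF a e u (monomial d 1 * (X 1 ^ 2 + C u * X 2 ^ e)) = 0 := by
  rw [mul_add, X_pow_eq_monomial, C_mul_X_pow_eq_monomial, monomial_mul, monomial_mul,
    mul_one, map_add, NF_monomial, NF_monomial, one_smul]
  by_cases h0 : a ≤ d 0
  · rw [nfMon_zero_of_ge, nfMon_zero_of_ge, smul_zero, add_zero] <;>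
      simp [Finsupp.single_apply, h0]
  by_cases hd1 : d 1 = 0
  · by_cases hd2 : d 2 = 0
    · -- the cancellation case
      have e1 : nfMon a e u (d + Finsupp.single 1 2)
          = monomial (Finsupp.single 0 (d 0) + Finsupp.single 2 e) (-u) := by
        rw [nfMon]
        rw [if_neg (by simpa [Finsupp.single_apply] using h0),
          if_neg (by simp [Finsupp.single_apply, hd1]),
          if_neg (by simp [Finsupp.single_apply, hd1]),
          if_pos (by simp [Finsupp.single_apply, hd1, hd2])]
        congr 2
        simp [Finsupp.single_apply]
      have e2 : nfMon a e u (d + Finsupp.single 2 e)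
          = monomial (d + Finsupp.single 2 e) 1 := by
        rw [nfMon]
        rw [if_neg (by simpa [Finsupp.single_apply] using h0),
          if_pos (by simp [Finsupp.single_apply, hd1]),
          if_pos (by simp [Finsupp.single_apply, hd2])]
      rw [e1, e2, smul_monomial, smul_eq_mul, mul_one]
      have hde : d + Finsupp.single 2 e = Finsupp.single 0 (d 0) + Finsupp.single 2 e := by
        ext i
        fin_cases i <;> simp [Finsupp.single_apply] <;> omega
      rw [hde, ← map_add]
      norm_num
    · rw [nfMon_zero_of_both a e u (d := d + Finsupp.single 1 2)
        (by simp [Finsupp.single_apply]) (by simp [Finsupp.single_apply]; omega),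
        nfMon_zero_of_hi2 a e u (d := d + Finsupp.single 2 e)
        (by simp [Finsupp.single_apply]; omega), smul_zero, add_zero]
  · rw [nfMon_zero_of_hi1 a e u (d := d + Finsupp.single 1 2)
      (by simp [Finsupp.single_apply]; omega),
      nfMon_zero_of_both a e u (d := d + Finsupp.single 2 e)
      (by simp [Finsupp.single_apply]; omega) (by simp [Finsupp.single_apply]; omega),
      smul_zero, add_zero]

/-- NF kills every multiple of a generator. -/
lemma NF_kill_mul (he : 1 ≤ e)
    (s : P) (hs : s ∈ ({X 0 ^ a, X 1 * X 2, X 1 ^ 2 + C u * X 2 ^ e} : Set P))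
    (q : P) : NF a e u (q * s) = 0 := by
  have : (NF a e u).comp (LinearMap.mulRight ℂ s) = 0 := by
    apply (basisMonomials (Fin 3) ℂ).ext
    intro d
    rw [coe_basisMonomials]
    simp only [LinearMap.comp_apply, LinearMap.mulRight_apply, LinearMap.zero_apply]
    rcases hs with h | h | h
    · rw [h]; exact NF_kill_gen1 a e u d
    · rw [h]; exact NF_kill_gen2 a e u d
    · rw [h]; exact NF_kill_gen3 a e u he d
  have := congrFun (congrArg (fun f => f.toFun) this) q
  simpa using this

lemma NF_kill (he : 1 ≤ e) {x : P} (hx : x ∈ Iid a e u) : NF a e u x = 0 := by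
  let K : Ideal P :=
    { carrier := {x | ∀ q : P, NF a e u (q * x) = 0}
      add_mem' := by
        intro x y hx hy q
        rw [mul_add, map_add, hx q, hy q, add_zero]
      zero_mem' := by intro q; rw [mul_zero, map_zero]
      smul_mem' := by
        intro c x hx q
        rw [smul_eq_mul, ← mul_assoc]
        exact hx (q * c) }
  have hK : Iid a e u ≤ K := by
    rw [Iid, Ideal.span_le]
    intro s hs q
    exact NF_kill_mul a e u he s hs q
  have := hK hx 1
  rwa [one_mul] at this

/-- The basis exponents. -/
def Dfin : Finset (Fin 3 →₀ ℕ) :=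
  ((Finset.range a) ×ˢ (((Finset.range (e + 1)).image fun k => ((0 : ℕ), k)) ∪ {(1, 0)})).image
    fun p => Finsupp.single 0 p.1 + Finsupp.single 1 p.2.1 + Finsupp.single 2 p.2.2

lemma pack_apply (i j k : ℕ) :
    ((Finsupp.single 0 i + Finsupp.single 1 j + Finsupp.single 2 k : Fin 3 →₀ ℕ) 0 = i)
    ∧ ((Finsupp.single 0 i + Finsupp.single 1 j + Finsupp.single 2 k : Fin 3 →₀ ℕ) 1 = j)
    ∧ ((Finsupp.single 0 i + Finsupp.single 1 j + Finsupp.single 2 k : Fin 3 →₀ ℕ) 2 = k) := by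
  refine ⟨?_, ?_, ?_⟩ <;> simp [Finsupp.single_apply]

lemma mem_Dfin {d : Fin 3 →₀ ℕ} :
    d ∈ Dfin a e ↔ d 0 < a ∧ ((d 1 = 0 ∧ d 2 ≤ e) ∨ (d 1 = 1 ∧ d 2 = 0)) := by
  constructor
  · intro hd
    rw [Dfin, Finset.mem_image] at hd
    obtain ⟨p, hp, rfl⟩ := hd
    rw [Finset.mem_product] at hp
    obtain ⟨hp1, hp2⟩ := hp
    rw [Finset.mem_range] at hp1
    rw [Finset.mem_union, Finset.mem_image, Finset.mem_singleton] at hp2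
    obtain ⟨h0, h1, h2⟩ := pack_apply p.1 p.2.1 p.2.2
    rw [h0, h1, h2]
    rcases hp2 with ⟨k, hk, hkp⟩ | hp
    · rw [Finset.mem_range] at hk
      refine ⟨hp1, Or.inl ?_⟩
      rw [← hkp]
      exact ⟨rfl, by omega⟩
    · rw [hp]
      exact ⟨hp1, Or.inr ⟨rfl, rfl⟩⟩
  · rintro ⟨h0, h12⟩
    rw [Dfin, Finset.mem_image]
    refine ⟨(d 0, d 1, d 2), ?_, ?_⟩
    · rw [Finset.mem_product, Finset.mem_range, Finset.mem_union, Finset.mem_image]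
      refine ⟨h0, ?_⟩
      rcases h12 with ⟨h1, h2⟩ | ⟨h1, h2⟩
      · exact Or.inl ⟨d 2, Finset.mem_range.2 (by omega), by rw [h1]⟩
      · exact Or.inr (by rw [Finset.mem_singleton, h1, h2])
    · ext i
      fin_cases i <;> simp [Finsupp.single_apply]

lemma card_Dfin : (Dfin a e).card = a * (e + 2) := by
  rw [Dfin]
  rw [Finset.card_image_of_injective _ ?inj]
  · rw [Finset.card_product, Finset.card_union_of_disjoint ?disj]
    · rw [Finset.card_image_of_injective _ (fun x y h => by simpa using h),
        Finset.card_range, Finset.card_range, Finset.card_singleton]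
    case disj =>
      rw [Finset.disjoint_singleton_right, Finset.mem_image]
      rintro ⟨k, -, hk⟩
      exact absurd hk (by simp)
  case inj =>
    intro p q h
    dsimp only at h
    obtain ⟨hp0, hp1, hp2⟩ := pack_apply p.1 p.2.1 p.2.2
    obtain ⟨hq0, hq1, hq2⟩ := pack_apply q.1 q.2.1 q.2.2
    have h0 : p.1 = q.1 := by rw [← hp0, ← hq0, h]
    have h1 : p.2.1 = q.2.1 := by rw [← hp1, ← hq1, h]
    have h2 : p.2.2 = q.2.2 := by rw [← hp2, ← hq2, h]
    exact Prod.ext h0 (Prod.ext h1 h2)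

lemma nfMon_fix {d : Fin 3 →₀ ℕ} (hd : d ∈ Dfin a e) :
    nfMon a e u d = monomial d 1 := by
  rw [mem_Dfin] at hd
  obtain ⟨h0, h12⟩ := hd
  rw [nfMon, if_neg (by omega)]
  rcases h12 with ⟨h1, h2⟩ | ⟨h1, h2⟩
  · rw [if_pos h1, if_pos h2]
  · rw [if_neg (by omega), if_pos h1, if_pos h2]

lemma nfMon_mem_span (d : Fin 3 →₀ ℕ) :
    nfMon a e u d ∈ Submodule.span ℂ ((fun d' => (monomial d' 1 : P)) '' (Dfin a e)) := by
  rw [nfMon]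
  split_ifs with h1 h2 h3 h4 h5 h6
  · exact Submodule.zero_mem _
  · exact Submodule.subset_span ⟨d, (mem_Dfin a e).2 ⟨by omega, Or.inl ⟨h2, h3⟩⟩, rfl⟩
  · exact Submodule.zero_mem _
  · exact Submodule.subset_span ⟨d, (mem_Dfin a e).2 ⟨by omega, Or.inr ⟨h4, h5⟩⟩, rfl⟩
  · exact Submodule.zero_mem _
  · have : (monomial (Finsupp.single 0 (d 0) + Finsupp.single 2 e) (-u) : P)
        = (-u) • monomial (Finsupp.single 0 (d 0) + Finsupp.single 2 e) 1 := by
      rw [smul_monomial, smul_eq_mul, mul_one]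
    rw [this]
    refine Submodule.smul_mem _ _ (Submodule.subset_span ⟨_, (mem_Dfin a e).2 ⟨?_, ?_⟩, rfl⟩)
    · simp [Finsupp.single_apply]; omega
    · left
      constructor <;> simp [Finsupp.single_apply]
  · exact Submodule.zero_mem _

lemma NF_fix_span (he : 1 ≤ e) {x : P}
    (hx : x ∈ Submodule.span ℂ ((fun d' => (monomial d' 1 : P)) '' (Dfin a e))) :
    NF a e u x = x := by
  induction hx using Submodule.span_induction with
  | mem p hp =>
    obtain ⟨d, hd, rfl⟩ := hp
    rw [NF_monomial, one_smul, nfMon_fix a e u hd]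
  | zero => rw [map_zero]
  | add p q _ _ hp hq => rw [map_add, hp, hq]
  | smul c p _ hp => rw [map_smul, hp]

lemma sub_NF_mem (he : 1 ≤ e) (hu : u ≠ 0) (p : P) : p - NF a e u p ∈ Iid a e u := by
  induction p using MvPolynomial.induction_on' with
  | monomial d r =>
    rw [NF_monomial]
    have : (monomial d r : P) - r • nfMon a e u d
        = r • (monomial d 1 - nfMon a e u d) := by
      rw [smul_sub, smul_monomial, smul_eq_mul, mul_one]
    rw [this]
    have hmem := sub_nf_mem a e u he hu d
    have : r • ((monomial d 1 : P) - nfMon a e u d)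
        = C r * (monomial d 1 - nfMon a e u d) := by
      rw [C_eq_smul_one, smul_mul_assoc, one_mul]
    rw [this]
    exact Ideal.mul_mem_left _ _ hmem
  | add p q hp hq =>
    have : p + q - NF a e u (p + q) = (p - NF a e u p) + (q - NF a e u q) := by
      rw [map_add]; ring
    rw [this]
    exact Ideal.add_mem _ hp hq

lemma NF_mem_span (p : P) :
    NF a e u p ∈ Submodule.span ℂ ((fun d' => (monomial d' 1 : P)) '' (Dfin a e)) := by
  induction p using MvPolynomial.induction_on' with
  | monomial d r =>
    rw [NF_monomial]
    exact Submodule.smul_mem _ _ (nfMon_mem_span a e u d)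
  | add p q hp hq =>
    rw [map_add]
    exact Submodule.add_mem _ hp hq

/-- The core dimension theorem. -/
theorem core (he : 1 ≤ e) (hu : u ≠ 0) :
    FiniteDimensional ℂ (P ⧸ Iid a e u) ∧
      Module.finrank ℂ (P ⧸ Iid a e u) = a * (e + 2) := by
  classical
  set mk' : P →ₗ[ℂ] P ⧸ Iid a e u := (Ideal.Quotient.mkₐ ℂ (Iid a e u)).toLinearMap with hmk'
  have hker : ∀ x : P, mk' x = 0 ↔ x ∈ Iid a e u := by
    intro x
    simp only [hmk', AlgHom.toLinearMap_apply, Ideal.Quotient.mkₐ_eq_mk]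
    exact Ideal.Quotient.eq_zero_iff_mem
  set S : Set P := (fun d' => (monomial d' 1 : P)) '' (Dfin a e) with hS
  -- the family
  set b : ↥(Dfin a e) → (P ⧸ Iid a e u) := fun d => mk' (monomial (d : Fin 3 →₀ ℕ) 1) with hb
  have hli : LinearIndependent ℂ b := by
    have hv : LinearIndependent ℂ (fun d : ↥(Dfin a e) => (monomial (d : Fin 3 →₀ ℕ) 1 : P)) := by
      have := (basisMonomials (Fin 3) ℂ).linearIndependent
      have h2 := this.comp (fun d : ↥(Dfin a e) => (d : Fin 3 →₀ ℕ)) Subtype.val_injective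
      rw [coe_basisMonomials] at h2
      exact h2
    refine hv.map (?_ : Disjoint (Submodule.span ℂ (Set.range _)) (LinearMap.ker mk'))
    rw [Submodule.disjoint_def]
    intro x hx hker'
    have hxS : x ∈ Submodule.span ℂ S := by
      refine Submodule.span_mono ?_ hx
      rintro _ ⟨d, rfl⟩
      exact ⟨(d : Fin 3 →₀ ℕ), d.2, rfl⟩
    have h1 : NF a e u x = x := NF_fix_span a e u he hxS
    have h2 : NF a e u x = 0 := NF_kill a e u he ((hker x).1 hker')
    rw [h1] at h2
    exact h2
  have hspan : ⊤ ≤ Submodule.span ℂ (Set.range b) := by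
    intro y _
    obtain ⟨p, rfl⟩ := Ideal.Quotient.mk_surjective (I := Iid a e u) y
    have hy : (Ideal.Quotient.mk (Iid a e u)) p = mk' p := by
      simp [hmk']
    rw [hy]
    have h1 : mk' p = mk' (NF a e u p) := by
      have h0 : mk' (p - NF a e u p) = 0 := (hker _).2 (sub_NF_mem a e u he hu p)
      rw [map_sub, sub_eq_zero] at h0
      exact h0
    rw [h1]
    have h2 := NF_mem_span a e u p
    have h3 : mk' (NF a e u p) ∈ Submodule.map mk' (Submodule.span ℂ S) :=
      Submodule.mem_map_of_mem h2
    rw [Submodule.map_span] at h3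
    refine Submodule.span_mono ?_ h3
    rintro _ ⟨_, ⟨d, hd, rfl⟩, rfl⟩
    exact ⟨⟨d, hd⟩, rfl⟩
  let B : Module.Basis ↥(Dfin a e) ℂ (P ⧸ Iid a e u) := Module.Basis.mk hli hspan
  refine ⟨Module.Finite.of_basis B, ?_⟩
  rw [Module.finrank_eq_card_basis B, Fintype.card_coe, card_Dfin]

end

end MilnorBlowDn

/-- The blow-`Dₙ` model `x₂²x₃ + x₃^{n-1} + c·x₁^m` of blow-order `m` has Milnor
number `n·(m-1)`. -/
theorem milnor_number_blow_Dn (n m : ℕ) (hn : 4 ≤ n) (hm : 1 ≤ m)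
    (c : ℂ) (hc : c ≠ 0) :
    FiniteDimensional ℂ
      (MvPolynomial (Fin 3) ℂ ⧸
        jacobianIdeal (X 1 ^ 2 * X 2 + X 2 ^ (n - 1) + C c * X 0 ^ m)) ∧
    Module.finrank ℂ
      (MvPolynomial (Fin 3) ℂ ⧸
        jacobianIdeal (X 1 ^ 2 * X 2 + X 2 ^ (n - 1) + C c * X 0 ^ m)) =
      n * (m - 1) := by
  set g : MvPolynomial (Fin 3) ℂ := X 1 ^ 2 * X 2 + X 2 ^ (n - 1) + C c * X 0 ^ m with hg
  set u : ℂ := ((n - 1 : ℕ) : ℂ) with hu'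
  have hu : u ≠ 0 := by
    rw [hu']
    exact Nat.cast_ne_zero.2 (by omega)
  have hcm : (c * m : ℂ) ≠ 0 := by
    apply mul_ne_zero hc
    exact Nat.cast_ne_zero.2 (by omega)
  have hp0 : pderiv 0 g = C (c * m) * X 0 ^ (m - 1) := by
    rw [hg]
    simp [pderiv_mul, pderiv_pow, pderiv_X_self, pderiv_X_of_ne]
    ring
  have hp1 : pderiv 1 g = 2 * (X 1 * X 2) := by
    rw [hg]
    simp [pderiv_mul, pderiv_pow, pderiv_X_self, pderiv_X_of_ne]
    ring
  have hp2 : pderiv 2 g = X 1 ^ 2 + C u * X 2 ^ (n - 2) := by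
    rw [hg, hu']
    simp [pderiv_mul, pderiv_pow, pderiv_X_self, pderiv_X_of_ne]
    left; rw [Nat.sub_sub]
  have hJ : jacobianIdeal g = MilnorBlowDn.Iid (m - 1) (n - 2) u := by
    rw [jacobianIdeal]
    apply le_antisymm
    · rw [Ideal.span_le]
      rintro _ ⟨i, rfl⟩
      fin_cases i
      · show pderiv (0 : Fin 3) g ∈ MilnorBlowDn.Iid (m - 1) (n - 2) u
        rw [hp0]
        exact Ideal.mul_mem_left _ _ (Ideal.subset_span (by simp))
      · show pderiv (1 : Fin 3) g ∈ MilnorBlowDn.Iid (m - 1) (n - 2) u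
        rw [hp1]
        exact Ideal.mul_mem_left _ _ (Ideal.subset_span (by simp))
      · show pderiv (2 : Fin 3) g ∈ MilnorBlowDn.Iid (m - 1) (n - 2) u
        rw [hp2]
        exact MilnorBlowDn.gen3_mem _ _ _
    · rw [MilnorBlowDn.Iid, Ideal.span_le]
      intro s hs
      simp only [Set.mem_insert_iff, Set.mem_singleton_iff] at hs
      rcases hs with rfl | rfl | rfl
      · have hkey : (X 0 ^ (m - 1) : MvPolynomial (Fin 3) ℂ) = C (c * m)⁻¹ * pderiv 0 g := by
          rw [hp0, ← mul_assoc, ← C_mul, inv_mul_cancel₀ hcm, C_1, one_mul]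
        rw [hkey]
        exact Ideal.mul_mem_left _ _ (Ideal.subset_span ⟨0, rfl⟩)
      · have hkey : (X 1 * X 2 : MvPolynomial (Fin 3) ℂ) = C 2⁻¹ * pderiv 1 g := by
          rw [hp1, ← mul_assoc, show ((2 : MvPolynomial (Fin 3) ℂ)) = C 2 from (map_ofNat C 2).symm,
            ← C_mul, inv_mul_cancel₀ (by norm_num : (2:ℂ) ≠ 0), C_1, one_mul]
        rw [hkey]
        exact Ideal.mul_mem_left _ _ (Ideal.subset_span ⟨1, rfl⟩)
      · rw [← hp2]
        exact Ideal.subset_span ⟨2, rfl⟩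
  rw [hJ]
  obtain ⟨h1, h2⟩ := MilnorBlowDn.core (m - 1) (n - 2) u (by omega) hu
  refine ⟨h1, ?_⟩
  rw [h2]
  have hn2 : n - 2 + 2 = n := by omega
  rw [hn2, Nat.mul_comm]
end

section
/- Let m ≥ 1 be an integer and c ∈ ℂ with c ≠ 0. For g := X₂³ + X₃⁴ + c·X₁^m ∈ MvPolynomial (Fin 3) ℂ (the blow-E₆ model of blow-order m), the Milnor algebra MvPolynomial (Fin 3) ℂ / J(g) is a ℂ-vector space of dimension 6·(m−1). -/
open MvPolynomial

section aux

variable (a b e : ℕ)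

/-- The set of exponents of the generating monomials. -/
def expSet (a b e : ℕ) : Set (Fin 3 →₀ ℕ) :=
  {Finsupp.single 0 a, Finsupp.single 1 b, Finsupp.single 2 e}

/-- The monomial ideal `(x₀^a, x₁^b, x₂^e)`. -/
noncomputable def monIdeal (a b e : ℕ) : Ideal (MvPolynomial (Fin 3) ℂ) :=
  Ideal.span ((fun s => monomial s (1 : ℂ)) '' expSet a b e)

/-- Exponent vector from a triple. -/
noncomputable def dvec (t : Fin a × Fin b × Fin e) : Fin 3 →₀ ℕ :=
  Finsupp.single 0 t.1.1 + Finsupp.single 1 t.2.1.1 + Finsupp.single 2 t.2.2.1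

lemma dvec_apply0 (t : Fin a × Fin b × Fin e) : dvec a b e t 0 = t.1.1 := by
  simp [dvec, Finsupp.single_apply]

lemma dvec_apply1 (t : Fin a × Fin b × Fin e) : dvec a b e t 1 = t.2.1.1 := by
  simp [dvec, Finsupp.single_apply]

lemma dvec_apply2 (t : Fin a × Fin b × Fin e) : dvec a b e t 2 = t.2.2.1 := by
  simp [dvec, Finsupp.single_apply]

lemma dvec_injective : Function.Injective (dvec a b e) := by
  intro s t h
  have h0 := congrArg (fun f => f 0) h
  have h1 := congrArg (fun f => f 1) h
  have h2 := congrArg (fun f => f 2) h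
  simp only [dvec_apply0, dvec_apply1, dvec_apply2] at h0 h1 h2
  ext
  · exact h0
  · exact h1
  · exact h2

lemma monomial_mem_monIdeal {f : Fin 3 →₀ ℕ}
    (h : ¬(f 0 < a ∧ f 1 < b ∧ f 2 < e)) :
    (monomial f (1 : ℂ)) ∈ monIdeal a b e := by
  rw [monIdeal, mem_ideal_span_monomial_image]
  intro xi hxi
  rw [MvPolynomial.support_monomial, if_neg one_ne_zero, Finset.mem_singleton] at hxi
  obtain rfl : f = xi := hxi.symm
  push_neg at h
  rcases Nat.lt_or_ge (f 0) a with h0 | h0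
  · rcases Nat.lt_or_ge (f 1) b with h1 | h1
    · exact ⟨Finsupp.single 2 e, Or.inr (Or.inr rfl), Finsupp.single_le_iff.2 (h h0 h1)⟩
    · exact ⟨Finsupp.single 1 b, Or.inr (Or.inl rfl), Finsupp.single_le_iff.2 h1⟩
  · exact ⟨Finsupp.single 0 a, Or.inl rfl, Finsupp.single_le_iff.2 h0⟩

lemma monomial_not_mem_monIdeal {f : Fin 3 →₀ ℕ}
    (h : f 0 < a ∧ f 1 < b ∧ f 2 < e) :
    (monomial f (1 : ℂ)) ∉ monIdeal a b e := by
  rw [monIdeal, mem_ideal_span_monomial_image]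
  intro hmem
  have := hmem f (by
    rw [MvPolynomial.support_monomial, if_neg one_ne_zero]; exact Finset.mem_singleton_self f)
  rcases this with ⟨si, hsi, hle⟩
  rcases hsi with rfl | rfl | rfl
  · exact absurd (Finsupp.single_le_iff.1 hle) (not_le.2 h.1)
  · exact absurd (Finsupp.single_le_iff.1 hle) (not_le.2 h.2.1)
  · exact absurd (Finsupp.single_le_iff.1 hle) (not_le.2 h.2.2)

/-- The canonical basis vectors of the quotient by the monomial ideal. -/
noncomputable def qBasisFun (t : Fin a × Fin b × Fin e) :
    MvPolynomial (Fin 3) ℂ ⧸ monIdeal a b e :=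
  Ideal.Quotient.mk (monIdeal a b e) (monomial (dvec a b e t) 1)

lemma qBasis_indep : LinearIndependent ℂ (qBasisFun a b e) := by
  rw [linearIndependent_iff]
  intro l hl
  set w : Fin a × Fin b × Fin e → MvPolynomial (Fin 3) ℂ :=
    fun t => monomial (dvec a b e t) 1 with hw
  set P : MvPolynomial (Fin 3) ℂ := Finsupp.linearCombination ℂ w l with hP
  have hπ : (Ideal.Quotient.mkₐ ℂ (monIdeal a b e)).toLinearMap ∘ w = qBasisFun a b e := by
    funext t; rfl
  have hPmem : P ∈ monIdeal a b e := by
    have := Finsupp.apply_linearCombination ℂ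
      (Ideal.Quotient.mkₐ ℂ (monIdeal a b e)).toLinearMap w l
    rw [hπ, hl] at this
    exact (Ideal.Quotient.eq_zero_iff_mem).1 this
  have hcoeff : ∀ t, coeff (dvec a b e t) P = l t := by
    intro t
    rw [hP, Finsupp.linearCombination_apply, Finsupp.sum, coeff_sum]
    rw [Finset.sum_eq_single t]
    · simp [hw, coeff_monomial]
    · intro s hs hst
      simp only [hw, MvPolynomial.coeff_smul, coeff_monomial]
      rw [if_neg (fun hEq => hst (dvec_injective a b e hEq))]
      simp
    · intro ht
      simp only [hw, MvPolynomial.coeff_smul, coeff_monomial, if_pos rfl]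
      rw [Finsupp.notMem_support_iff.1 ht]
      simp
  ext t
  by_contra hlt
  have hmem : dvec a b e t ∈ P.support := by
    rw [MvPolynomial.mem_support_iff, hcoeff t]
    simpa using hlt
  rw [monIdeal, mem_ideal_span_monomial_image] at hPmem
  rcases hPmem _ hmem with ⟨si, hsi, hle⟩
  rcases hsi with rfl | rfl | rfl
  · have := Finsupp.single_le_iff.1 hle
    rw [dvec_apply0] at this
    exact absurd this (not_le.2 t.1.2)
  · have := Finsupp.single_le_iff.1 hle
    rw [dvec_apply1] at this
    exact absurd this (not_le.2 t.2.1.2)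
  · have := Finsupp.single_le_iff.1 hle
    rw [dvec_apply2] at this
    exact absurd this (not_le.2 t.2.2.2)

lemma finsupp_fin3_eq (f : Fin 3 →₀ ℕ) :
    f = Finsupp.single 0 (f 0) + Finsupp.single 1 (f 1) + Finsupp.single 2 (f 2) := by
  ext i
  fin_cases i <;> simp [Finsupp.single_apply]

lemma qBasis_span : ⊤ ≤ Submodule.span ℂ (Set.range (qBasisFun a b e)) := by
  rintro x -
  obtain ⟨p, rfl⟩ := Ideal.Quotient.mk_surjective x
  induction p using MvPolynomial.induction_on' with
  | add p q hp hq =>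
    rw [map_add]
    exact Submodule.add_mem _ hp hq
  | monomial u r =>
    have h1 : (monomial u r : MvPolynomial (Fin 3) ℂ) = r • monomial u 1 := by
      rw [MvPolynomial.smul_monomial, smul_eq_mul, mul_one]
    have hsm : (Ideal.Quotient.mk (monIdeal a b e)) (monomial u r)
        = r • (Ideal.Quotient.mk (monIdeal a b e)) (monomial u 1) := by
      rw [h1]
      exact map_smul (Ideal.Quotient.mkₐ ℂ (monIdeal a b e)) r _
    rw [hsm]
    refine Submodule.smul_mem _ _ ?_
    by_cases h : u 0 < a ∧ u 1 < b ∧ u 2 < e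
    · have hu : dvec a b e (⟨u 0, h.1⟩, ⟨u 1, h.2.1⟩, ⟨u 2, h.2.2⟩) = u := by
        rw [dvec]
        exact (finsupp_fin3_eq u).symm
      have : Ideal.Quotient.mk (monIdeal a b e) (monomial u 1) =
          qBasisFun a b e (⟨u 0, h.1⟩, ⟨u 1, h.2.1⟩, ⟨u 2, h.2.2⟩) := by
        rw [qBasisFun, hu]
      rw [this]
      exact Submodule.subset_span ⟨_, rfl⟩
    · rw [Ideal.Quotient.eq_zero_iff_mem.2 (monomial_mem_monIdeal a b e h)]
      exact Submodule.zero_mem _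

/-- A basis of the quotient by the monomial ideal. -/
noncomputable def qBasis : Module.Basis (Fin a × Fin b × Fin e) ℂ
    (MvPolynomial (Fin 3) ℂ ⧸ monIdeal a b e) :=
  Module.Basis.mk (qBasis_indep a b e) (qBasis_span a b e)

end aux

/-- The blow-`E₆` model `x₂³ + x₃⁴ + c·x₁^m` of blow-order `m` has Milnor
number `6·(m-1)`. -/
theorem milnor_number_blow_E6 (m : ℕ) (hm : 1 ≤ m) (c : ℂ) (hc : c ≠ 0) :
    FiniteDimensional ℂ
      (MvPolynomial (Fin 3) ℂ ⧸ jacobianIdeal (X 1 ^ 3 + X 2 ^ 4 + C c * X 0 ^ m)) ∧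
    Module.finrank ℂ
      (MvPolynomial (Fin 3) ℂ ⧸ jacobianIdeal (X 1 ^ 3 + X 2 ^ 4 + C c * X 0 ^ m)) =
      6 * (m - 1) := by
  set g : MvPolynomial (Fin 3) ℂ := X 1 ^ 3 + X 2 ^ 4 + C c * X 0 ^ m with hg
  have hcm : (c * m) ≠ 0 := by
    exact mul_ne_zero hc (Nat.cast_ne_zero.mpr (by omega))
  have hp0 : pderiv 0 g = C (c * m) * X 0 ^ (m - 1) := by
    simp [hg, pderiv_pow, pderiv_X_of_ne, pderiv_X_self, map_mul]
    ring
  have hp1 : pderiv 1 g = C 3 * X 1 ^ 2 := by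
    simp [hg, pderiv_pow, pderiv_X_of_ne, pderiv_X_self, map_ofNat]
  have hp2 : pderiv 2 g = C 4 * X 2 ^ 3 := by
    simp [hg, pderiv_pow, pderiv_X_of_ne, pderiv_X_self, map_ofNat]
  have hm0 : (monomial (Finsupp.single (0 : Fin 3) (m - 1)) (1 : ℂ)) = X 0 ^ (m - 1) :=
    X_pow_eq_monomial.symm
  have hm1 : (monomial (Finsupp.single (1 : Fin 3) 2) (1 : ℂ)) = X 1 ^ 2 :=
    X_pow_eq_monomial.symm
  have hm2 : (monomial (Finsupp.single (2 : Fin 3) 3) (1 : ℂ)) = X 2 ^ 3 :=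
    X_pow_eq_monomial.symm
  have hIeq : jacobianIdeal g = monIdeal (m - 1) 2 3 := by
    apply le_antisymm
    · rw [jacobianIdeal, Ideal.span_le]
      rintro _ ⟨i, rfl⟩
      have h0' : (monomial (Finsupp.single (0:Fin 3) (m-1)) (1:ℂ)) ∈ monIdeal (m-1) 2 3 :=
        Ideal.subset_span ⟨_, Or.inl rfl, rfl⟩
      have h1' : (monomial (Finsupp.single (1:Fin 3) 2) (1:ℂ)) ∈ monIdeal (m-1) 2 3 :=
        Ideal.subset_span ⟨_, Or.inr (Or.inl rfl), rfl⟩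
      have h2' : (monomial (Finsupp.single (2:Fin 3) 3) (1:ℂ)) ∈ monIdeal (m-1) 2 3 :=
        Ideal.subset_span ⟨_, Or.inr (Or.inr rfl), rfl⟩
      fin_cases i
      · show pderiv 0 g ∈ (monIdeal (m - 1) 2 3 : Ideal _)
        rw [hp0, ← hm0]; exact Ideal.mul_mem_left _ _ h0'
      · show pderiv 1 g ∈ (monIdeal (m - 1) 2 3 : Ideal _)
        rw [hp1, ← hm1]; exact Ideal.mul_mem_left _ _ h1'
      · show pderiv 2 g ∈ (monIdeal (m - 1) 2 3 : Ideal _)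
        rw [hp2, ← hm2]; exact Ideal.mul_mem_left _ _ h2'
    · rw [monIdeal, Ideal.span_le]
      rintro _ ⟨s, hs, rfl⟩
      have hJ : ∀ i : Fin 3, pderiv i g ∈ jacobianIdeal g := fun i =>
        Ideal.subset_span ⟨i, rfl⟩
      rcases hs with rfl | rfl | rfl
      all_goals show (monomial _ (1:ℂ)) ∈ (jacobianIdeal g : Ideal _)
      · have : (monomial (Finsupp.single (0:Fin 3) (m-1)) (1:ℂ)) =
            C (c * m)⁻¹ * pderiv 0 g := by
          rw [hp0, hm0, ← mul_assoc, ← map_mul, inv_mul_cancel₀ hcm, map_one, one_mul]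
        rw [this]; exact Ideal.mul_mem_left _ _ (hJ 0)
      · have : (monomial (Finsupp.single (1:Fin 3) 2) (1:ℂ)) =
            C (3 : ℂ)⁻¹ * pderiv 1 g := by
          rw [hp1, hm1, ← mul_assoc, ← map_mul, inv_mul_cancel₀ (by norm_num), map_one,
            one_mul]
        rw [this]; exact Ideal.mul_mem_left _ _ (hJ 1)
      · have : (monomial (Finsupp.single (2:Fin 3) 3) (1:ℂ)) =
            C (4 : ℂ)⁻¹ * pderiv 2 g := by
          rw [hp2, hm2, ← mul_assoc, ← map_mul, inv_mul_cancel₀ (by norm_num), map_one,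
            one_mul]
        rw [this]; exact Ideal.mul_mem_left _ _ (hJ 2)
  rw [hIeq]
  have B := qBasis (m - 1) 2 3
  constructor
  · exact Module.Finite.of_basis B
  · rw [Module.finrank_eq_card_basis B, Fintype.card_prod, Fintype.card_prod,
      Fintype.card_fin, Fintype.card_fin, Fintype.card_fin]
    ring
end

section
/- Let m ≥ 1 be an integer and c ∈ ℂ with c ≠ 0. For g := X₂³ + X₂X₃³ + c·X₁^m ∈ MvPolynomial (Fin 3) ℂ (the blow-E₇ model of blow-order m), the Milnor algebra MvPolynomial (Fin 3) ℂ / J(g) is a ℂ-vector space of dimension 7·(m−1). -/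
open MvPolynomial

namespace BlowE7Aux

noncomputable section

abbrev P3 := MvPolynomial (Fin 3) ℂ

def q1 : P3 := MvPolynomial.C 3 * MvPolynomial.X 1 ^ 2 + MvPolynomial.X 2 ^ 3
def q2 : P3 := MvPolynomial.X 1 * MvPolynomial.X 2 ^ 2

def Jn (n : ℕ) : Ideal P3 := Ideal.span {MvPolynomial.X 0 ^ n, q1, q2}

abbrev Rr (n : ℕ) := AdjoinRoot ((Polynomial.X : Polynomial ℂ) ^ n)

lemma root_pow_n (n : ℕ) : (AdjoinRoot.root ((Polynomial.X : Polynomial ℂ) ^ n)) ^ n = 0 := by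
  rw [← AdjoinRoot.mk_X, ← map_pow, AdjoinRoot.mk_self]

def E (i j : Fin 7) (c : ℂ) : Matrix (Fin 7) (Fin 7) ℂ := Matrix.single i j c

def Y0 : Matrix (Fin 7) (Fin 7) ℂ := E 1 0 1 + E 5 1 (-(1/3)) + E 3 2 1 + E 6 3 (-(1/3))
def Z0 : Matrix (Fin 7) (Fin 7) ℂ := E 2 0 1 + E 3 1 1 + E 4 2 1 + E 5 4 1 + E 6 5 1

lemma comm0 : Y0 * Z0 = Z0 * Y0 := by
  simp +decide [Y0, Z0, E, add_mul, mul_add, Matrix.single_mul_single_same,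
    Matrix.single_mul_single_of_ne]

lemma rel1 : algebraMap ℂ (Matrix (Fin 7) (Fin 7) ℂ) 3 * (Y0 * Y0) + Z0 * (Z0 * Z0) = 0 := by
  rw [← Algebra.smul_def]
  simp +decide [Y0, Z0, E, add_mul, mul_add, Matrix.single_mul_single_same,
    Matrix.single_mul_single_of_ne, smul_add, Matrix.smul_single]
  rw [add_add_add_comm, ← Matrix.single_add, ← Matrix.single_add]
  norm_num

lemma rel2 : Y0 * (Z0 * Z0) = 0 := by
  simp +decide [Y0, Z0, E, add_mul, mul_add, Matrix.single_mul_single_same,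
    Matrix.single_mul_single_of_ne]

lemma Z2 : Z0 * Z0 = E 4 0 1 + E 5 2 1 + E 6 4 1 := by
  simp +decide [Z0, E, add_mul, mul_add, Matrix.single_mul_single_same,
    Matrix.single_mul_single_of_ne]

lemma Z3 : Z0 * (Z0 * Z0) = E 5 0 1 + E 6 2 1 := by
  rw [Z2]
  simp +decide [Z0, E, add_mul, mul_add, Matrix.single_mul_single_same,
    Matrix.single_mul_single_of_ne]

lemma Z4 : Z0 * (Z0 * (Z0 * Z0)) = E 6 0 1 := by
  rw [Z3]
  simp +decide [Z0, E, add_mul, mul_add, Matrix.single_mul_single_same,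
    Matrix.single_mul_single_of_ne]

lemma YZ : Y0 * Z0 = E 3 0 1 + E 6 1 (-(1/3)) := by
  simp +decide [Y0, Z0, E, add_mul, mul_add, Matrix.single_mul_single_same,
    Matrix.single_mul_single_of_ne]

/-- the seven basis matrices over ℂ -/
def B0 : Fin 7 → Matrix (Fin 7) (Fin 7) ℂ := fun j =>
  if j = 0 then 1 else if j = 1 then Y0 else if j = 2 then Z0 else if j = 3 then Y0 * Z0
  else if j = 4 then Z0 * Z0 else if j = 5 then Z0 * (Z0 * Z0) else Z0 * (Z0 * (Z0 * Z0))

set_option maxHeartbeats 1000000 in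
lemma colB (j j' : Fin 7) : (B0 j) j' 0 = if j' = j then 1 else 0 := by
  fin_cases j <;> simp only [B0, if_true, if_false, reduceIte, Fin.isValue] <;>
    (try rw [Z4]) <;> (try rw [Z3]) <;> (try rw [Z2]) <;> (try rw [YZ]) <;>
    fin_cases j' <;>
    simp +decide [Y0, Z0, E, Matrix.single, Matrix.one_apply]

variable (n : ℕ)

abbrev MatR (n : ℕ) := Matrix (Fin 7) (Fin 7) (Rr n)

/-- the base-change algebra hom on matrices -/
def Φ (n : ℕ) : Matrix (Fin 7) (Fin 7) ℂ →ₐ[ℂ] MatR n :=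
  AlgHom.mapMatrix (Algebra.ofId ℂ (Rr n))

def Ym (n : ℕ) : MatR n := Φ n Y0
def Zm (n : ℕ) : MatR n := Φ n Z0
def Xm (n : ℕ) : MatR n := algebraMap (Rr n) (MatR n) (AdjoinRoot.root _)

lemma Xm_pow_n : Xm n ^ n = 0 := by
  rw [Xm, ← map_pow, root_pow_n, map_zero]

lemma comm_XY : Xm n * Ym n = Ym n * Xm n := by rw [Xm]; exact Algebra.commutes _ _
lemma comm_XZ : Xm n * Zm n = Zm n * Xm n := by rw [Xm]; exact Algebra.commutes _ _
lemma comm_YZ : Ym n * Zm n = Zm n * Ym n := by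
  rw [Ym, Zm, ← _root_.map_mul, ← _root_.map_mul, comm0]

lemma relR1 : algebraMap ℂ (MatR n) 3 * (Ym n * Ym n) + Zm n * (Zm n * Zm n) = 0 := by
  rw [Ym, Zm, ← _root_.map_mul, ← _root_.map_mul, ← _root_.map_mul, ← AlgHom.commutes (Φ n) 3, ← _root_.map_mul,
    ← map_add, rel1, map_zero]

lemma relR2 : Ym n * (Zm n * Zm n) = 0 := by
  rw [Ym, Zm, ← _root_.map_mul, ← _root_.map_mul, rel2, map_zero]

def Sn (n : ℕ) : Subalgebra ℂ (MatR n) := Algebra.adjoin ℂ {Xm n, Ym n, Zm n}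

set_option maxHeartbeats 1000000 in
instance : CommRing (Sn n) :=
  { (Sn n).toRing with
    mul_comm := (Algebra.adjoinCommRingOfComm ℂ (by
    rintro a (rfl | rfl | rfl) b (rfl | rfl | rfl) <;>
      first
        | with_reducible rfl
        | with_reducible exact comm_XY n
        | with_reducible exact (comm_XY n).symm
        | with_reducible exact comm_XZ n
        | with_reducible exact (comm_XZ n).symm
        | with_reducible exact comm_YZ n
        | with_reducible exact (comm_YZ n).symm)).mul_comm }

lemma hxS : Xm n ∈ Sn n := Algebra.subset_adjoin (by simp)
lemma hyS : Ym n ∈ Sn n := Algebra.subset_adjoin (by simp)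
lemma hzS : Zm n ∈ Sn n := Algebra.subset_adjoin (by simp)

def φ (n : ℕ) : P3 →ₐ[ℂ] Sn n :=
  MvPolynomial.aeval (![⟨Xm n, hxS n⟩, ⟨Ym n, hyS n⟩, ⟨Zm n, hzS n⟩] : Fin 3 → Sn n)

def ψ (n : ℕ) : P3 →ₐ[ℂ] MatR n := (Sn n).val.comp (φ n)

lemma ψ_X0 : ψ n (MvPolynomial.X 0) = Xm n := by simp [ψ, φ]
lemma ψ_X1 : ψ n (MvPolynomial.X 1) = Ym n := by simp [ψ, φ]
lemma ψ_X2 : ψ n (MvPolynomial.X 2) = Zm n := by simp [ψ, φ]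

lemma Jn_le_ker : Jn n ≤ RingHom.ker (ψ n) := by
  rw [Jn, Ideal.span_le]
  rintro p (rfl | rfl | rfl) <;> simp only [SetLike.mem_coe, RingHom.mem_ker]
  · rw [map_pow, ψ_X0, Xm_pow_n]
  · rw [q1, map_add, _root_.map_mul, map_pow, map_pow, ψ_X1, ψ_X2,
      show (MvPolynomial.C (3:ℂ) : P3) = algebraMap ℂ P3 3 from rfl, AlgHom.commutes]
    calc _ = algebraMap ℂ (MatR n) 3 * (Ym n * Ym n) + Zm n * (Zm n * Zm n) := by noncomm_ring
    _ = 0 := relR1 n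
  · rw [q2, _root_.map_mul, map_pow, ψ_X1, ψ_X2]
    calc _ = Ym n * (Zm n * Zm n) := by noncomm_ring
    _ = 0 := relR2 n

def bmon : Fin 7 → P3 := fun j =>
  if j = 0 then 1 else if j = 1 then MvPolynomial.X 1 else if j = 2 then MvPolynomial.X 2
  else if j = 3 then MvPolynomial.X 1 * MvPolynomial.X 2 else if j = 4 then MvPolynomial.X 2 ^ 2
  else if j = 5 then MvPolynomial.X 2 ^ 3 else MvPolynomial.X 2 ^ 4

def v (q : ℕ × Fin 7) : P3 := MvPolynomial.X 0 ^ q.1 * bmon q.2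

def Mn (n : ℕ) : Submodule ℂ P3 :=
  ((Jn n).restrictScalars ℂ) ⊔ Submodule.span ℂ (Set.range v)

lemma hq0 : MvPolynomial.X 0 ^ n ∈ Jn n := Ideal.subset_span (by simp)
lemma hq1 : q1 ∈ Jn n := Ideal.subset_span (by simp)
lemma hq2 : q2 ∈ Jn n := Ideal.subset_span (by simp)

lemma hv (q : ℕ × Fin 7) : v q ∈ Mn n :=
  Submodule.mem_sup_right (Submodule.subset_span (Set.mem_range_self q))

lemma hJMn {p : P3} (hp : p ∈ Jn n) : p ∈ Mn n := Submodule.mem_sup_left hp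

lemma third_smul (x : P3) : (3:ℂ)⁻¹ • (MvPolynomial.C 3 * x) = x := by
  rw [MvPolynomial.smul_eq_C_mul, ← mul_assoc, ← _root_.map_mul]
  norm_num

lemma h00 (i : ℕ) (j : Fin 7) : MvPolynomial.X (0 : Fin 3) * v (i, j) ∈ Mn n := by
  have e : MvPolynomial.X (0 : Fin 3) * v (i, j) = v (i+1, j) := by
    simp only [v]; ring
  rw [e]; exact hv n _

lemma h10 (i : ℕ) : MvPolynomial.X (1 : Fin 3) * v (i, 0) ∈ Mn n := by
  have e : MvPolynomial.X (1 : Fin 3) * v (i, 0) = v (i, 1) := by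
    simp +decide [v, bmon]; ring
  rw [e]; exact hv n _

lemma h11 (i : ℕ) : MvPolynomial.X (1 : Fin 3) * v (i, 1) ∈ Mn n := by
  have e : MvPolynomial.C (3:ℂ) * (MvPolynomial.X (1 : Fin 3) * v (i, 1)) =
      -v (i, 5) + MvPolynomial.X 0 ^ i * q1 := by
    simp +decide [v, bmon, q1]; ring
  rw [← third_smul (MvPolynomial.X (1 : Fin 3) * v (i, 1)), e]
  exact Submodule.smul_mem _ _
    (add_mem (neg_mem (hv n _)) (hJMn n (Ideal.mul_mem_left _ _ (hq1 n))))

lemma h12 (i : ℕ) : MvPolynomial.X (1 : Fin 3) * v (i, 2) ∈ Mn n := by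
  have e : MvPolynomial.X (1 : Fin 3) * v (i, 2) = v (i, 3) := by
    simp +decide [v, bmon]; ring
  rw [e]; exact hv n _

lemma h13 (i : ℕ) : MvPolynomial.X (1 : Fin 3) * v (i, 3) ∈ Mn n := by
  have e : MvPolynomial.C (3:ℂ) * (MvPolynomial.X (1 : Fin 3) * v (i, 3)) =
      -v (i, 6) + MvPolynomial.X 0 ^ i * MvPolynomial.X 2 * q1 := by
    simp +decide [v, bmon, q1]; ring
  rw [← third_smul (MvPolynomial.X (1 : Fin 3) * v (i, 3)), e]
  exact Submodule.smul_mem _ _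
    (add_mem (neg_mem (hv n _)) (hJMn n (Ideal.mul_mem_left _ _ (hq1 n))))

lemma h14 (i : ℕ) : MvPolynomial.X (1 : Fin 3) * v (i, 4) ∈ Mn n := by
  have e : MvPolynomial.X (1 : Fin 3) * v (i, 4) = MvPolynomial.X 0 ^ i * q2 := by
    simp +decide [v, bmon, q2]; ring
  rw [e]; exact hJMn n (Ideal.mul_mem_left _ _ (hq2 n))

lemma h15 (i : ℕ) : MvPolynomial.X (1 : Fin 3) * v (i, 5) ∈ Mn n := by
  have e : MvPolynomial.X (1 : Fin 3) * v (i, 5) =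
      MvPolynomial.X 0 ^ i * MvPolynomial.X 2 * q2 := by
    simp +decide [v, bmon, q2]; ring
  rw [e]; exact hJMn n (Ideal.mul_mem_left _ _ (hq2 n))

lemma h16 (i : ℕ) : MvPolynomial.X (1 : Fin 3) * v (i, 6) ∈ Mn n := by
  have e : MvPolynomial.X (1 : Fin 3) * v (i, 6) =
      MvPolynomial.X 0 ^ i * MvPolynomial.X 2 ^ 2 * q2 := by
    simp +decide [v, bmon, q2]; ring
  rw [e]; exact hJMn n (Ideal.mul_mem_left _ _ (hq2 n))

lemma h20 (i : ℕ) : MvPolynomial.X (2 : Fin 3) * v (i, 0) ∈ Mn n := by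
  have e : MvPolynomial.X (2 : Fin 3) * v (i, 0) = v (i, 2) := by
    simp +decide [v, bmon]; ring
  rw [e]; exact hv n _

lemma h21 (i : ℕ) : MvPolynomial.X (2 : Fin 3) * v (i, 1) ∈ Mn n := by
  have e : MvPolynomial.X (2 : Fin 3) * v (i, 1) = v (i, 3) := by
    simp +decide [v, bmon]; ring
  rw [e]; exact hv n _

lemma h22 (i : ℕ) : MvPolynomial.X (2 : Fin 3) * v (i, 2) ∈ Mn n := by
  have e : MvPolynomial.X (2 : Fin 3) * v (i, 2) = v (i, 4) := by
    simp +decide [v, bmon]; ring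
  rw [e]; exact hv n _

lemma h23 (i : ℕ) : MvPolynomial.X (2 : Fin 3) * v (i, 3) ∈ Mn n := by
  have e : MvPolynomial.X (2 : Fin 3) * v (i, 3) = MvPolynomial.X 0 ^ i * q2 := by
    simp +decide [v, bmon, q2]; ring
  rw [e]; exact hJMn n (Ideal.mul_mem_left _ _ (hq2 n))

lemma h24 (i : ℕ) : MvPolynomial.X (2 : Fin 3) * v (i, 4) ∈ Mn n := by
  have e : MvPolynomial.X (2 : Fin 3) * v (i, 4) = v (i, 5) := by
    simp +decide [v, bmon]; ring
  rw [e]; exact hv n _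

lemma h25 (i : ℕ) : MvPolynomial.X (2 : Fin 3) * v (i, 5) ∈ Mn n := by
  have e : MvPolynomial.X (2 : Fin 3) * v (i, 5) = v (i, 6) := by
    simp +decide [v, bmon]; ring
  rw [e]; exact hv n _

lemma h26 (i : ℕ) : MvPolynomial.X (2 : Fin 3) * v (i, 6) ∈ Mn n := by
  have e : MvPolynomial.X (2 : Fin 3) * v (i, 6) =
      MvPolynomial.X 0 ^ i * MvPolynomial.X 2 ^ 2 * q1 -
        MvPolynomial.C 3 * (MvPolynomial.X 0 ^ i * MvPolynomial.X 1) * q2 := by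
    simp +decide [v, bmon, q1, q2]; ring
  rw [e]
  exact sub_mem (hJMn n (Ideal.mul_mem_left _ _ (hq1 n)))
    (hJMn n (Ideal.mul_mem_left _ _ (hq2 n)))

lemma mulX_v (k : Fin 3) (i : ℕ) (j : Fin 7) : MvPolynomial.X k * v (i, j) ∈ Mn n := by
  fin_cases k
  · exact h00 n i j
  · fin_cases j
    · exact h10 n i
    · exact h11 n i
    · exact h12 n i
    · exact h13 n i
    · exact h14 n i
    · exact h15 n i
    · exact h16 n i
  · fin_cases j
    · exact h20 n i
    · exact h21 n i
    · exact h22 n i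
    · exact h23 n i
    · exact h24 n i
    · exact h25 n i
    · exact h26 n i

lemma mulX_mem (k : Fin 3) (p : P3) (hp : p ∈ Mn n) : MvPolynomial.X k * p ∈ Mn n := by
  obtain ⟨a, ha, b, hb, rfl⟩ := Submodule.mem_sup.mp hp
  rw [mul_add]
  refine add_mem (hJMn n (Ideal.mul_mem_left _ _ ha)) ?_
  clear hp
  induction hb using Submodule.span_induction with
  | mem x hx => obtain ⟨⟨i, j⟩, rfl⟩ := hx; exact mulX_v n k i j
  | zero => rw [mul_zero]; exact zero_mem _
  | add x y hx hy ihx ihy => rw [mul_add]; exact add_mem ihx ihy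
  | smul a x hx ihx => rw [mul_smul_comm]; exact Submodule.smul_mem _ _ ihx

lemma Mn_top (p : P3) : p ∈ Mn n := by
  induction p using MvPolynomial.induction_on with
  | C a =>
      have e : MvPolynomial.C a = a • v (0, 0) := by
        simp +decide [v, bmon, MvPolynomial.smul_eq_C_mul]
      rw [e]; exact Submodule.smul_mem _ _ (hv n _)
  | add p q hp hq => exact add_mem hp hq
  | mul_X p k hp => rw [mul_comm]; exact mulX_mem n k p hp

lemma ψ_bmon (j : Fin 7) : ψ n (bmon j) = Φ n (B0 j) := by
  fin_cases j <;>
    simp +decide [bmon, B0, _root_.map_mul, map_pow, _root_.map_one, ψ_X1, ψ_X2, Ym, Zm,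
      pow_succ, pow_zero, one_mul, mul_assoc]

lemma ψ_v (i : ℕ) (j j' : Fin 7) :
    ψ n (v (i, j)) j' 0 =
      (AdjoinRoot.root ((Polynomial.X : Polynomial ℂ) ^ n)) ^ i *
        (if j' = j then (1 : Rr n) else 0) := by
  have : ψ n (v (i, j)) = (AdjoinRoot.root ((Polynomial.X : Polynomial ℂ) ^ n)) ^ i •
      Φ n (B0 j) := by
    rw [v, _root_.map_mul, map_pow, ψ_X0, ψ_bmon, Xm, ← map_pow, ← Algebra.smul_def]
  rw [this, Matrix.smul_apply, smul_eq_mul]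
  congr 1
  rw [Φ, AlgHom.mapMatrix_apply, Matrix.map_apply, colB]
  split <;> simp

/-- the quotient map -/
def π (n : ℕ) : P3 →ₐ[ℂ] (P3 ⧸ Jn n) := Ideal.Quotient.mkₐ ℂ (Jn n)

def u (n : ℕ) : Fin n × Fin 7 → (P3 ⧸ Jn n) := fun q => π n (v (q.1.1, q.2))

lemma indep_u : LinearIndependent ℂ (u n) := by
  rw [Fintype.linearIndependent_iff]
  intro g hg q₀
  set s : P3 := ∑ q : Fin n × Fin 7, g q • v (q.1.1, q.2) with hs
  have hsJ : s ∈ Jn n := by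
    rw [← Ideal.Quotient.eq_zero_iff_mem (I := Jn n)]
    have : Ideal.Quotient.mk (Jn n) s = ∑ q : Fin n × Fin 7, g q • u n q := by
      rw [hs, map_sum]
      refine Finset.sum_congr rfl fun q _ => ?_
      rw [← Ideal.Quotient.mkₐ_eq_mk ℂ, _root_.map_smul]; rfl
    rw [this, hg]
  have hψ : ψ n s = 0 := Jn_le_ker n hsJ
  have hψs : ψ n s = ∑ q : Fin n × Fin 7, g q • ψ n (v (q.1.1, q.2)) := by
    rw [hs, map_sum]
    exact Finset.sum_congr rfl fun q _ => map_smul (ψ n) _ _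
  have key : (0 : Rr n) = ∑ i : Fin n, g (i, q₀.2) •
      (AdjoinRoot.root ((Polynomial.X : Polynomial ℂ) ^ n)) ^ (i : ℕ) := by
    have h1 : (0 : Rr n) =
        (∑ q : Fin n × Fin 7, g q • ψ n (v (q.1.1, q.2))) q₀.2 0 := by
      rw [← hψs, hψ]; rfl
    rw [h1, Matrix.sum_apply, Fintype.sum_prod_type]
    refine Finset.sum_congr rfl fun i _ => ?_
    have hterm : ∀ j : Fin 7, ((g (i, j) • ψ n (v (i.1, j))) q₀.2 0) =
        if q₀.2 = j then g (i, j) • (AdjoinRoot.root ((Polynomial.X : Polynomial ℂ) ^ n)) ^ (i:ℕ)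
        else 0 := by
      intro j
      rw [Matrix.smul_apply, ψ_v]
      split <;> simp [smul_eq_mul, mul_comm]
    calc ∑ j : Fin 7, ((g (i, j) • ψ n (v (i.1, j))) q₀.2 0)
        = ∑ j : Fin 7, if q₀.2 = j then
            g (i, j) • (AdjoinRoot.root ((Polynomial.X : Polynomial ℂ) ^ n)) ^ (i:ℕ) else 0 :=
          Finset.sum_congr rfl fun j _ => hterm j
      _ = g (i, q₀.2) • (AdjoinRoot.root ((Polynomial.X : Polynomial ℂ) ^ n)) ^ (i:ℕ) := by
          rw [Finset.sum_ite_eq]; simp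
  -- build the polynomial
  set P : Polynomial ℂ := ∑ i : Fin n, Polynomial.C (g (i, q₀.2)) * Polynomial.X ^ (i : ℕ)
    with hP
  have hmkP : AdjoinRoot.mk ((Polynomial.X : Polynomial ℂ) ^ n) P = 0 := by
    rw [hP, map_sum]
    rw [show (0 : Rr n) = ∑ i : Fin n, g (i, q₀.2) •
        (AdjoinRoot.root ((Polynomial.X : Polynomial ℂ) ^ n)) ^ (i : ℕ) from key]
    refine Finset.sum_congr rfl fun i _ => ?_
    rw [_root_.map_mul, map_pow, AdjoinRoot.mk_X, AdjoinRoot.mk_C,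
      ← AdjoinRoot.algebraMap_eq, ← Algebra.smul_def]
  obtain ⟨Q, hQ⟩ := (AdjoinRoot.mk_eq_zero).mp hmkP
  have hcoeff : P.coeff q₀.1 = g q₀ := by
    rw [hP, Polynomial.finset_sum_coeff]
    have hterm : ∀ i : Fin n, (Polynomial.C (g (i, q₀.2)) * Polynomial.X ^ (i : ℕ)).coeff q₀.1
        = if i = q₀.1 then g (i, q₀.2) else 0 := by
      intro i
      rw [Polynomial.coeff_C_mul, Polynomial.coeff_X_pow]
      by_cases hij : i = q₀.1
      · simp [hij]
      · have hvij : ¬ ((q₀.1 : ℕ) = (i:ℕ)) := fun h => hij (Fin.ext h.symm)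
        simp [hij, hvij]
    rw [Finset.sum_congr rfl fun i _ => hterm i, Finset.sum_ite_eq']
    simp
  have hne : ¬ n ≤ (q₀.1 : ℕ) := Nat.not_le.mpr q₀.1.2
  rw [← hcoeff, hQ, mul_comm, Polynomial.coeff_mul_X_pow', if_neg hne]

lemma v_mem_Jn_of_le {i : ℕ} (hi : n ≤ i) (j : Fin 7) : v (i, j) ∈ Jn n := by
  have e : v (i, j) = (MvPolynomial.X 0 ^ (i - n) * bmon j) * MvPolynomial.X 0 ^ n := by
    rw [v]
    rw [mul_assoc, mul_comm (bmon j), ← mul_assoc, ← pow_add]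
    congr 2
    omega
  rw [e]
  exact Ideal.mul_mem_left _ _ (hq0 n)

lemma span_u : ⊤ ≤ Submodule.span ℂ (Set.range (u n)) := by
  intro x _
  obtain ⟨p, rfl⟩ := Ideal.Quotient.mkₐ_surjective ℂ (I := Jn n) x
  obtain ⟨a, ha, b, hb, rfl⟩ := Submodule.mem_sup.mp (Mn_top n p)
  have h0 : π n a = 0 := by
    rw [π, Ideal.Quotient.mkₐ_eq_mk, Ideal.Quotient.eq_zero_iff_mem]; exact ha
  have : (Ideal.Quotient.mkₐ ℂ (Jn n)) (a + b) = π n b := by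
    rw [map_add, show (Ideal.Quotient.mkₐ ℂ (Jn n)) a = 0 from h0, zero_add]; rfl
  rw [this]
  have hb' : π n b ∈ Submodule.map (π n).toLinearMap (Submodule.span ℂ (Set.range v)) :=
    Submodule.mem_map_of_mem hb
  rw [Submodule.map_span] at hb'
  refine Submodule.span_le.mpr ?_ hb'
  rintro _ ⟨_, ⟨⟨i, j⟩, rfl⟩, rfl⟩
  by_cases hi : i < n
  · exact Submodule.subset_span ⟨(⟨i, hi⟩, j), rfl⟩
  · have : π n (v (i, j)) = 0 := by
      rw [π, Ideal.Quotient.mkₐ_eq_mk, Ideal.Quotient.eq_zero_iff_mem]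
      exact v_mem_Jn_of_le n (Nat.le_of_not_lt hi) j
    rw [AlgHom.toLinearMap_apply, this]
    exact zero_mem _

def bQ (n : ℕ) : Module.Basis (Fin n × Fin 7) ℂ (P3 ⧸ Jn n) := Module.Basis.mk (indep_u n) (span_u n)

lemma findim_Q : FiniteDimensional ℂ (P3 ⧸ Jn n) := Module.Finite.of_basis (bQ n)

lemma finrank_Q : Module.finrank ℂ (P3 ⧸ Jn n) = n * 7 := by
  rw [Module.finrank_eq_card_basis (bQ n)]
  simp

lemma jac_eq (m : ℕ) (hm : 1 ≤ m) (c : ℂ) (hc : c ≠ 0) :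
    jacobianIdeal (MvPolynomial.X 1 ^ 3 + MvPolynomial.X 1 * MvPolynomial.X 2 ^ 3 +
      MvPolynomial.C c * MvPolynomial.X 0 ^ m) = Jn (m - 1) := by
  have hcm : (c * (m : ℂ)) ≠ 0 := mul_ne_zero hc (Nat.cast_ne_zero.mpr (by omega))
  set g : P3 := MvPolynomial.X 1 ^ 3 + MvPolynomial.X 1 * MvPolynomial.X 2 ^ 3 +
      MvPolynomial.C c * MvPolynomial.X 0 ^ m with hg
  have hp0 : MvPolynomial.pderiv 0 g = MvPolynomial.C (c * m) * MvPolynomial.X 0 ^ (m - 1) := by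
    simp [hg, MvPolynomial.pderiv_pow, MvPolynomial.pderiv_C_mul, MvPolynomial.pderiv_X,
      MvPolynomial.pderiv_mul, map_ofNat]
    ring
  have hp1 : MvPolynomial.pderiv 1 g = q1 := by
    simp [hg, q1, MvPolynomial.pderiv_pow, MvPolynomial.pderiv_C_mul, MvPolynomial.pderiv_X,
      MvPolynomial.pderiv_mul, map_ofNat]
  have hp2 : MvPolynomial.pderiv 2 g = MvPolynomial.C 3 * q2 := by
    simp [hg, q2, MvPolynomial.pderiv_pow, MvPolynomial.pderiv_C_mul, MvPolynomial.pderiv_X,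
      MvPolynomial.pderiv_mul, map_ofNat]
    ring
  have mem0 : MvPolynomial.pderiv (0 : Fin 3) g ∈ Jn (m - 1) := by
    rw [hp0]; exact Ideal.mul_mem_left _ _ (hq0 (m - 1))
  have mem1 : MvPolynomial.pderiv (1 : Fin 3) g ∈ Jn (m - 1) := by
    rw [hp1]; exact hq1 (m - 1)
  have mem2 : MvPolynomial.pderiv (2 : Fin 3) g ∈ Jn (m - 1) := by
    rw [hp2]; exact Ideal.mul_mem_left _ _ (hq2 (m - 1))
  have jm0 : MvPolynomial.pderiv (0 : Fin 3) g ∈ jacobianIdeal g :=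
    Ideal.subset_span ⟨0, rfl⟩
  have jm1 : MvPolynomial.pderiv (1 : Fin 3) g ∈ jacobianIdeal g :=
    Ideal.subset_span ⟨1, rfl⟩
  have jm2 : MvPolynomial.pderiv (2 : Fin 3) g ∈ jacobianIdeal g :=
    Ideal.subset_span ⟨2, rfl⟩
  apply le_antisymm
  · rw [jacobianIdeal, Ideal.span_le]
    rintro _ ⟨i, rfl⟩
    fin_cases i
    · exact mem0
    · exact mem1
    · exact mem2
  · rw [Jn, Ideal.span_le]
    rintro p hp
    simp only [Set.mem_insert_iff, Set.mem_singleton_iff] at hp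
    rcases hp with rfl | rfl | rfl
    · have e : MvPolynomial.X 0 ^ (m - 1) =
          MvPolynomial.C (c * (m : ℂ))⁻¹ * MvPolynomial.pderiv 0 g := by
        rw [hp0, ← mul_assoc, ← _root_.map_mul, inv_mul_cancel₀ hcm, _root_.map_one, one_mul]
      rw [SetLike.mem_coe, e]
      exact Ideal.mul_mem_left _ _ jm0
    · rw [SetLike.mem_coe, ← hp1]
      exact jm1
    · have e : q2 = MvPolynomial.C ((3 : ℂ)⁻¹) * MvPolynomial.pderiv 2 g := by
        rw [hp2, ← mul_assoc, ← _root_.map_mul]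
        norm_num
      rw [SetLike.mem_coe, e]
      exact Ideal.mul_mem_left _ _ jm2

end
end BlowE7Aux

/-- The blow-`E₇` model `x₂³ + x₂x₃³ + c·x₁^m` of blow-order `m` has Milnor
number `7·(m-1)`. -/
theorem milnor_number_blow_E7 (m : ℕ) (hm : 1 ≤ m) (c : ℂ) (hc : c ≠ 0) :
    FiniteDimensional ℂ
      (MvPolynomial (Fin 3) ℂ ⧸
        jacobianIdeal (X 1 ^ 3 + X 1 * X 2 ^ 3 + C c * X 0 ^ m)) ∧
    Module.finrank ℂ
      (MvPolynomial (Fin 3) ℂ ⧸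
        jacobianIdeal (X 1 ^ 3 + X 1 * X 2 ^ 3 + C c * X 0 ^ m)) =
      7 * (m - 1) := by
  rw [BlowE7Aux.jac_eq m hm c hc]
  exact ⟨BlowE7Aux.findim_Q (m - 1), by rw [BlowE7Aux.finrank_Q (m - 1)]; ring⟩
end

section
/- Let m ≥ 1 be an integer and c ∈ ℂ with c ≠ 0. For g := X₂³ + X₃⁵ + c·X₁^m ∈ MvPolynomial (Fin 3) ℂ (the blow-E₈ model of blow-order m), the Milnor algebra MvPolynomial (Fin 3) ℂ / J(g) is a ℂ-vector space of dimension 8·(m−1). -/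
open MvPolynomial

variable {n : ℕ}

noncomputable def boxIdeal (d : Fin n → ℕ) : Ideal (MvPolynomial (Fin n) ℂ) :=
  Ideal.span (Set.range fun i => X i ^ d i)

lemma mem_boxIdeal_iff (d : Fin n → ℕ) (f : MvPolynomial (Fin n) ℂ) :
    f ∈ boxIdeal d ↔ ∀ s ∈ f.support, ∃ i, d i ≤ s i := by
  constructor
  · intro hf
    let S : Ideal (MvPolynomial (Fin n) ℂ) :=
      { carrier := {f | ∀ s ∈ f.support, ∃ i, d i ≤ s i}
        add_mem' := by
          intro a b ha hb s hs
          rcases Finset.mem_union.1 (MvPolynomial.support_add hs) with h | h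
          · exact ha s h
          · exact hb s h
        zero_mem' := by simp
        smul_mem' := by
          intro g f hf s hs
          rw [smul_eq_mul] at hs
          obtain ⟨t, ht, u, hu, rfl⟩ := Finset.mem_add.1 (MvPolynomial.support_mul g f hs)
          obtain ⟨i, hi⟩ := hf u hu
          exact ⟨i, hi.trans (by simp)⟩ }
    have hle : boxIdeal d ≤ S := by
      refine Ideal.span_le.2 ?_
      rintro _ ⟨i, rfl⟩ s hs
      simp only [X_pow_eq_monomial] at hs
      rcases Finset.mem_singleton.1 (MvPolynomial.support_monomial_subset hs) with rfl
      exact ⟨i, by simp⟩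
    exact hle hf
  · intro h
    rw [← support_sum_monomial_coeff f]
    refine Ideal.sum_mem _ fun s hs => ?_
    obtain ⟨i, hi⟩ := h s hs
    have hdvd : X i ^ d i ∣ monomial s (coeff s f) := by
      rw [X_pow_eq_monomial]
      refine monomial_dvd_monomial.2 ⟨Or.inr fun j => ?_, one_dvd _⟩
      rcases eq_or_ne j i with rfl | hji
      · simpa using hi
      · simp [Finsupp.single_apply, hji.symm]
    exact Ideal.mem_of_dvd _ hdvd (Ideal.subset_span ⟨i, rfl⟩)

noncomputable def boxEnc (d : Fin n → ℕ) (v : ∀ i, Fin (d i)) : Fin n →₀ ℕ :=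
  Finsupp.equivFunOnFinite.symm fun i => (v i : ℕ)

lemma boxEnc_apply (d : Fin n → ℕ) (v : ∀ i, Fin (d i)) (i : Fin n) :
    boxEnc d v i = v i := rfl

lemma boxEnc_injective (d : Fin n → ℕ) : Function.Injective (boxEnc d) := by
  intro v w h
  funext i
  have := DFunLike.congr_fun h i
  simpa [boxEnc_apply, Fin.val_injective.eq_iff] using Fin.val_injective this

lemma mk_monomial_smul (I : Ideal (MvPolynomial (Fin n) ℂ)) (s : Fin n →₀ ℕ) (a : ℂ) :
    Ideal.Quotient.mk I (monomial s a) = a • Ideal.Quotient.mk I (monomial s 1) := by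
  have h1 : (monomial s) a = a • monomial s 1 := by
    rw [smul_monomial, smul_eq_mul, mul_one]
  rw [h1]
  exact Submodule.Quotient.mk_smul _ _ _

noncomputable def boxBasis (d : Fin n → ℕ) :
    Module.Basis (∀ i, Fin (d i)) ℂ (MvPolynomial (Fin n) ℂ ⧸ boxIdeal d) := by
  refine Module.Basis.mk (v := fun v => Ideal.Quotient.mk _ (monomial (boxEnc d v) 1)) ?_ ?_
  · rw [linearIndependent_iff']
    intro t g hg w hw
    by_contra hgw
    have : Ideal.Quotient.mk (boxIdeal d) (∑ v ∈ t, monomial (boxEnc d v) (g v)) = 0 := by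
      rw [← hg, map_sum]
      exact Finset.sum_congr rfl fun v _ => (mk_monomial_smul _ _ _)
    rw [Ideal.Quotient.eq_zero_iff_mem, mem_boxIdeal_iff] at this
    have hsupp : boxEnc d w ∈ (∑ v ∈ t, monomial (boxEnc d v) (g v)).support := by
      rw [MvPolynomial.mem_support_iff]
      rw [coeff_sum]
      have : ∀ v ∈ t, v ≠ w → coeff (boxEnc d w) (monomial (boxEnc d v) (g v)) = 0 := by
        intro v _ hvw
        rw [coeff_monomial, if_neg]
        exact fun h => hvw (boxEnc_injective d h)
      rw [Finset.sum_eq_single w this (fun h => absurd hw h)]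
      simpa [coeff_monomial] using hgw
    obtain ⟨i, hi⟩ := this _ hsupp
    rw [boxEnc_apply] at hi
    exact absurd hi (Nat.not_le.2 (w i).isLt)
  · rw [top_le_iff, eq_top_iff]
    rintro x -
    obtain ⟨p, rfl⟩ := Ideal.Quotient.mk_surjective x
    rw [← support_sum_monomial_coeff p, map_sum]
    refine Submodule.sum_mem _ fun s _ => ?_
    by_cases hs : ∀ i, s i < d i
    · have hsv : boxEnc d (fun i => ⟨s i, hs i⟩) = s := by
        ext i; rw [boxEnc_apply]
      rw [mk_monomial_smul, ← hsv]
      exact Submodule.smul_mem _ _ (Submodule.subset_span ⟨_, rfl⟩)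
    · push_neg at hs
      obtain ⟨i, hi⟩ := hs
      have : monomial s (coeff s p) ∈ boxIdeal d := by
        rw [mem_boxIdeal_iff]
        intro u hu
        rcases Finset.mem_singleton.1 (MvPolynomial.support_monomial_subset hu) with rfl
        exact ⟨i, hi⟩
      rw [Ideal.Quotient.eq_zero_iff_mem.2 this]
      exact Submodule.zero_mem _

instance boxFinite (d : Fin n → ℕ) :
    FiniteDimensional ℂ (MvPolynomial (Fin n) ℂ ⧸ boxIdeal d) :=
  Module.Finite.of_basis (boxBasis d)

lemma boxFinrank (d : Fin n → ℕ) :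
    Module.finrank ℂ (MvPolynomial (Fin n) ℂ ⧸ boxIdeal d) = ∏ i, d i := by
  rw [Module.finrank_eq_card_basis (boxBasis d), Fintype.card_pi]
  simp



/-- The blow-`E₈` model `x₂³ + x₃⁵ + c·x₁^m` of blow-order `m` has Milnor
number `8·(m-1)`. -/
theorem milnor_number_blow_E8 (m : ℕ) (hm : 1 ≤ m) (c : ℂ) (hc : c ≠ 0) :
    FiniteDimensional ℂ
      (MvPolynomial (Fin 3) ℂ ⧸ jacobianIdeal (X 1 ^ 3 + X 2 ^ 5 + C c * X 0 ^ m)) ∧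
    Module.finrank ℂ
      (MvPolynomial (Fin 3) ℂ ⧸ jacobianIdeal (X 1 ^ 3 + X 2 ^ 5 + C c * X 0 ^ m)) =
      8 * (m - 1) := by
  set g : MvPolynomial (Fin 3) ℂ := X 1 ^ 3 + X 2 ^ 5 + C c * X 0 ^ m with hg
  have hcm : c * (m : ℂ) ≠ 0 :=
    mul_ne_zero hc (Nat.cast_ne_zero.2 (by omega))
  have h0 : pderiv 0 g = C (c * m) * X 0 ^ (m - 1) := by
    rw [hg]
    simp [pderiv_pow, pderiv_X_of_ne, pderiv_C_mul]
    ring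
  have h1 : pderiv 1 g = C 3 * X 1 ^ 2 := by
    rw [hg, show (C 3 : MvPolynomial (Fin 3) ℂ) = 3 from map_ofNat _ 3]
    simp [pderiv_pow, pderiv_X_of_ne, pderiv_C_mul]
  have h2 : pderiv 2 g = C 5 * X 2 ^ 4 := by
    rw [hg, show (C 5 : MvPolynomial (Fin 3) ℂ) = 5 from map_ofNat _ 5]
    simp [pderiv_pow, pderiv_X_of_ne, pderiv_C_mul]
  have key : jacobianIdeal g = boxIdeal ![m - 1, 2, 4] := by
    apply le_antisymm
    · rw [jacobianIdeal, Ideal.span_le]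
      rintro _ ⟨i, rfl⟩
      fin_cases i
      · show pderiv 0 g ∈ boxIdeal ![m - 1, 2, 4]
        rw [h0]
        exact Ideal.mul_mem_left _ _ (Ideal.subset_span ⟨0, rfl⟩)
      · show pderiv 1 g ∈ boxIdeal ![m - 1, 2, 4]
        rw [h1]
        exact Ideal.mul_mem_left _ _ (Ideal.subset_span ⟨1, rfl⟩)
      · show pderiv 2 g ∈ boxIdeal ![m - 1, 2, 4]
        rw [h2]
        exact Ideal.mul_mem_left _ _ (Ideal.subset_span ⟨2, rfl⟩)
    · rw [boxIdeal, Ideal.span_le]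
      rintro _ ⟨i, rfl⟩
      fin_cases i
      · have : (X 0 : MvPolynomial (Fin 3) ℂ) ^ (m - 1) = C (c * m)⁻¹ * pderiv 0 g := by
          rw [h0, ← mul_assoc, ← C_mul, inv_mul_cancel₀ hcm, C_1, one_mul]
        show (X 0 : MvPolynomial (Fin 3) ℂ) ^ (m - 1) ∈ jacobianIdeal g
        rw [this]
        exact Ideal.mul_mem_left _ _ (Ideal.subset_span ⟨0, rfl⟩)
      · have : (X 1 : MvPolynomial (Fin 3) ℂ) ^ 2 = C (3 : ℂ)⁻¹ * pderiv 1 g := by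
          rw [h1, ← mul_assoc, ← C_mul, inv_mul_cancel₀ (by norm_num), C_1, one_mul]
        show (X 1 : MvPolynomial (Fin 3) ℂ) ^ 2 ∈ jacobianIdeal g
        rw [this]
        exact Ideal.mul_mem_left _ _ (Ideal.subset_span ⟨1, rfl⟩)
      · have : (X 2 : MvPolynomial (Fin 3) ℂ) ^ 4 = C (5 : ℂ)⁻¹ * pderiv 2 g := by
          rw [h2, ← mul_assoc, ← C_mul, inv_mul_cancel₀ (by norm_num), C_1, one_mul]
        show (X 2 : MvPolynomial (Fin 3) ℂ) ^ 4 ∈ jacobianIdeal g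
        rw [this]
        exact Ideal.mul_mem_left _ _ (Ideal.subset_span ⟨2, rfl⟩)
  rw [key]
  refine ⟨boxFinite _, ?_⟩
  rw [boxFinrank, Fin.prod_univ_three]
  simp only [Matrix.cons_val_zero, Matrix.cons_val_one, Matrix.head_cons,
    Matrix.cons_val_two, Matrix.tail_cons]
  omega
end
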